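/- Well-definedness and coset-type invariance of the Grassmannian Weingarten function: Fix integers k ≥ 1, N and M with k ≤ N and 1 ≤ M < N. If 𝔪, 𝔪′ ∈ 𝒫_k have the same coset-type λ(𝔪) = λ(𝔪′), then for any function i strongly admissible for 𝔪 and any function i′ strongly admissible for 𝔪′ one has ∫ ∏_{a=1}^{k} A_{i(2a−1)i(2a)} dμ(A) = ∫ ∏_{a=1}^{k} A_{i′(2a−1)i′(2a)} dμ(A). In particular Wg^A(𝔪) is well defined (independent of the strongly admissible function chosen) and depends only on the coset-type of 𝔪. -/

import Mathlib

open scoped Classical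
open MeasureTheory



/-- A pair partition of `{1, …, 2k}`, encoded as an involution of `ℕ` that
moves exactly the points `1, …, 2k`.  The pairs are the two-element sets `{a, f a}`. -/
structure PairPartition (k : ℕ) where
  f : ℕ → ℕ
  invol : ∀ a, f (f a) = a
  moves : ∀ a, f a ≠ a ↔ (1 ≤ a ∧ a ≤ 2 * k)

namespace PairPartition

/-- The function underlying the identity (trivial) pair partition
`(1 2 | 3 4 | ⋯ | 2k-1 2k)`. -/
def trivFun (k : ℕ) (a : ℕ) : ℕ :=
  if 1 ≤ a ∧ a ≤ 2 * k then (if a % 2 = 1 then a + 1 else a - 1) else a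

/-- The identity pair partition `𝔢_k = (1 2 | 3 4 | ⋯ | 2k-1 2k)`. -/
def triv (k : ℕ) : PairPartition k where
  f := trivFun k
  invol := by intro a; unfold trivFun; split_ifs <;> omega
  moves := by intro a; unfold trivFun; split_ifs <;> omega

theorem ext' {k : ℕ} {m m' : PairPartition k} (h : m.f = m'.f) : m = m' := by
  cases m; cases m'; simpa using h

/-- The action of the transposition `(i j) ∈ S_{2k}` on pair partitions of `{1, …, 2k}`
(defined to do nothing if `i` or `j` lies outside `{1, …, 2k}`). -/
def swapAct {k : ℕ} (i j : ℕ) (m : PairPartition k) : PairPartition k :=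
  if h : 1 ≤ i ∧ i ≤ 2 * k ∧ 1 ≤ j ∧ j ≤ 2 * k then
    { f := fun a => Equiv.swap i j (m.f (Equiv.swap i j a))
      invol := by intro a; simp [m.invol]
      moves := by
        obtain ⟨hi1, hi2, hj1, hj2⟩ := h
        intro a
        have key : ∀ x y : ℕ, Equiv.swap i j x ≠ y ↔ x ≠ Equiv.swap i j y := by
          intro x y
          constructor
          · intro hxy hc; apply hxy; rw [hc]; simp
          · intro hxy hc; apply hxy; rw [← hc]; simp
        rw [key, ← Equiv.swap_apply_self i j a, Equiv.swap_apply_self i j a]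
        rw [m.moves (Equiv.swap i j a)]
        rcases eq_or_ne a i with rfl | hai
        · rw [Equiv.swap_apply_left]; omega
        rcases eq_or_ne a j with rfl | haj
        · rw [Equiv.swap_apply_right]; omega
        · rw [Equiv.swap_apply_of_ne_of_ne hai haj] }
  else m

/-- Removing the pair `{2k-1, 2k}` from a pair partition: the operation `𝔪 ↦ 𝔪↓`
(defined to return the trivial pair partition if `{2k-1, 2k} ∉ 𝔪`). -/
def down {k : ℕ} (m : PairPartition k) : PairPartition (k - 1) :=
  if h : m.f (2 * k - 1) = 2 * k then
    { f := fun a => if a = 2 * k - 1 ∨ a = 2 * k then a else m.f a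
      invol := by
        intro a
        by_cases ha : a = 2 * k - 1 ∨ a = 2 * k
        · simp [ha]
        · have h2k : m.f (2 * k) = 2 * k - 1 := by
            conv_lhs => rw [← h]
            exact m.invol _
          have hne1 : m.f a ≠ 2 * k - 1 := by
            intro hfa
            have h1 : m.f (m.f a) = m.f (2 * k - 1) := by rw [hfa]
            rw [m.invol, h] at h1
            exact ha (Or.inr h1)
          have hne2 : m.f a ≠ 2 * k := by
            intro hfa
            have h1 : m.f (m.f a) = m.f (2 * k) := by rw [hfa]
            rw [m.invol, h2k] at h1
            exact ha (Or.inl h1)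
          simp only [if_neg ha, if_neg (not_or.mpr ⟨hne1, hne2⟩), m.invol]
      moves := by
        intro a
        by_cases ha : a = 2 * k - 1 ∨ a = 2 * k
        · simp only [if_pos ha]
          rcases ha with ha | ha <;> subst ha <;> constructor <;> intro h' <;> first
            | exact absurd rfl h'
            | omega
        · push_neg at ha
          obtain ⟨ha1, ha2⟩ := ha
          simp only [if_neg (not_or.mpr ⟨ha1, ha2⟩)]
          rw [m.moves a]
          omega }
  else triv (k - 1)

/-- A pair partition as a permutation (involution) of `ℕ`. -/
def perm {k : ℕ} (m : PairPartition k) : Equiv.Perm ℕ :=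
  Function.Involutive.toPerm m.f m.invol

end PairPartition

namespace PairPartition

/-- The connected component (cycle) of the multigraph `Γ(𝔪)` containing a vertex `v`:
the orbit of `v` under the group generated by the involutions `𝔢_k` and `𝔪`. -/
def gammaOrbit {k : ℕ} (m : PairPartition k) (v : ℕ) : Set ℕ :=
  MulAction.orbit (Subgroup.closure {(triv k).perm, m.perm} : Subgroup (Equiv.Perm ℕ)) v

/-- The charge function of `Γ(𝔪)`: `charge m v` holds iff `v` receives charge `+`,
i.e. iff `v` is at even distance (in `Γ(𝔪)`) from the largest label of its cycle.
The vertices at even distance from the largest label `M` of a cycle are exactly the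
orbit of `M` under the cyclic group generated by `𝔪 ∘ 𝔢_k`. -/
def charge {k : ℕ} (m : PairPartition k) (v : ℕ) : Prop :=
  v ∈ MulAction.orbit (Subgroup.zpowers (m.perm * (triv k).perm) : Subgroup (Equiv.Perm ℕ))
        (sSup (gammaOrbit m v))

/-- The weight `ω^(b)(𝔪, (i j)·𝔪)` attached to the transposition `(i j)` acting on `𝔪`:
it is `1` if the charges of `i` and `j` in `Γ(𝔪)` agree, and `b` otherwise. -/
noncomputable def omegab {R : Type*} [CommRing R] (b : R) {k : ℕ}
    (m : PairPartition k) (i j : ℕ) : R :=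
  if (charge m i ↔ charge m j) then 1 else b

/-- The number of cycles of `Γ(𝔪)` of length `2ℓ`, i.e. the multiplicity of `ℓ`
in the coset-type `λ(𝔪)` of `𝔪`. -/
noncomputable def cycleCount {k : ℕ} (m : PairPartition k) (ℓ : ℕ) : ℕ :=
  (((Finset.Icc 1 (2 * k)).filter fun a => (gammaOrbit m a).ncard = 2 * ℓ).card) / (2 * ℓ)

/-- Two pair partitions have the same coset-type iff `Γ(𝔪)` and `Γ(𝔪')` have the same
number of cycles of every length. -/
def SameCosetType {k : ℕ} (m m' : PairPartition k) : Prop :=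
  ∀ ℓ : ℕ, cycleCount m ℓ = cycleCount m' ℓ

/-- The pair partition `𝔪` has coset-type the multiset `μ` (a partition of `k`,
presented as the multiset of its parts). -/
def HasCosetType {k : ℕ} (m : PairPartition k) (μ : Multiset ℕ) : Prop :=
  ∀ ℓ : ℕ, 1 ≤ ℓ → μ.count ℓ = cycleCount m ℓ

/-- All lists of length `n` with entries in the finset `S`. -/
def listsLen (S : Finset (ℕ × ℕ)) : ℕ → Finset (List (ℕ × ℕ))
  | 0 => {[]}
  | n + 1 => (S ×ˢ listsLen S n).image fun p => p.1 :: p.2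

/-- Apply a sequence `τ = (τ_1, …, τ_r)` of transpositions (each encoded as a pair)
to a pair partition, the rightmost transposition acting first:
`τ_1 ∘ τ_2 ∘ ⋯ ∘ τ_r · 𝔪`. -/
def applyFacts {k : ℕ} (l : List (ℕ × ℕ)) (m : PairPartition k) : PairPartition k :=
  l.foldr (fun t acc => swapAct t.1 t.2 acc) m

/-- `l` is a monotone factorisation of the pair partition `𝔪 ∈ 𝒫_k`: a sequence of
transpositions `(a_s b_s)` with `a_s < b_s`, all `b_s` odd, `b_1 ≤ b_2 ≤ ⋯ ≤ b_r`,
and `τ_1 ∘ ⋯ ∘ τ_r · 𝔪 = 𝔢_k`. -/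
def IsMonoFact {k : ℕ} (m : PairPartition k) (l : List (ℕ × ℕ)) : Prop :=
  (∀ t ∈ l, 1 ≤ t.1 ∧ t.1 < t.2 ∧ t.2 ≤ 2 * k ∧ Odd t.2) ∧
  List.Pairwise (· ≤ ·) (l.map Prod.snd) ∧
  applyFacts l m = triv k

/-- The hive number of a monotone factorisation: the number of distinct values among
`b_1, …, b_r`. -/
def hive (l : List (ℕ × ℕ)) : ℕ := (l.map Prod.snd).toFinset.card

/-- The flip number of a monotone factorisation `τ` of `𝔪`: the number of indices `s`
with `ω^(b)(𝔪^(s), τ_s · 𝔪^(s)) = b`, where `𝔪^(s) = τ_{s+1} ∘ ⋯ ∘ τ_r · 𝔪`. -/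
noncomputable def flip {k : ℕ} (m : PairPartition k) : List (ℕ × ℕ) → ℕ
  | [] => 0
  | t :: rest =>
      (if (charge (applyFacts rest m) t.1 ↔ charge (applyFacts rest m) t.2) then 0 else 1)
        + flip m rest

/-- The finset of monotone factorisations of `𝔪 ∈ 𝒫_k` of length `r`. -/
noncomputable def monoFinset {k : ℕ} (m : PairPartition k) (r : ℕ) : Finset (List (ℕ × ℕ)) :=
  (listsLen ((Finset.Icc 1 (2 * k)) ×ˢ (Finset.Icc 1 (2 * k))) r).filter fun l => IsMonoFact m l

/-- A sequence of transpositions is connected (relative to level `k`) if together with the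
involution `ι = (1 2)(3 4)⋯(2k-1 2k)` it generates a subgroup acting transitively on
`{1, …, 2k}`. -/
def IsConnectedFact (k : ℕ) (l : List (ℕ × ℕ)) : Prop :=
  ∀ a ∈ Finset.Icc 1 (2 * k), ∀ b ∈ Finset.Icc 1 (2 * k),
    ∃ σ ∈ Subgroup.closure
        ({(triv k).perm} ∪ {p : Equiv.Perm ℕ | ∃ t ∈ l, p = Equiv.swap t.1 t.2}),
      σ a = b

end PairPartition


noncomputable instance matrixMeasurableSpace {N : ℕ} :
    MeasurableSpace (Matrix (Fin N) (Fin N) ℝ) :=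
  inferInstanceAs (MeasurableSpace (Fin N → Fin N → ℝ))

/-- The compact group `O(N)` of real orthogonal `N × N` matrices. -/
abbrev OrthGroup (N : ℕ) := Matrix.orthogonalGroup (Fin N) ℝ

noncomputable instance orthMeasurableSpace {N : ℕ} : MeasurableSpace (OrthGroup N) :=
  borel _

/-- The diagonal matrix `I_{M,N}` whose first `M` diagonal entries are `1` and whose
remaining entries are `0`. -/
def IMN (N M : ℕ) : Matrix (Fin N) (Fin N) ℝ :=
  Matrix.diagonal fun p => if (p : ℕ) < M then (1 : ℝ) else 0

/-- The map `O ↦ O · I_{M,N} · Oᵀ` from `O(N)` onto the space `A(M,N)` of idempotent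
real symmetric `N × N` matrices of rank `M`. -/
def grassMap (N M : ℕ) (O : OrthGroup N) : Matrix (Fin N) (Fin N) ℝ :=
  (O : Matrix (Fin N) (Fin N) ℝ) * IMN N M * Matrix.transpose (O : Matrix (Fin N) (Fin N) ℝ)


/-- The product `A_{i(1)i(2)} A_{i(3)i(4)} ⋯ A_{i(2k-1)i(2k)}` of matrix entries. -/
def prodEntries {N : ℕ} (k : ℕ) (i : ℕ → Fin N) (A : Matrix (Fin N) (Fin N) ℝ) : ℝ :=
  ∏ a ∈ Finset.range k, A (i (2 * a + 1)) (i (2 * a + 2))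



open PairPartition


/-- A step in the (`b`- or `bt`-) Weingarten graph: a type-A edge `𝔪 → (i 2k-1)·𝔪`,
a type-B edge `𝔪 → 𝔪↓`, or a type-C edge `𝔪 → ((i 2k-1)·𝔪)↓`. -/
inductive WStep where
  | A (i : ℕ) : WStep
  | B : WStep
  | C (i : ℕ) : WStep
deriving DecidableEq

/-- `IsPathTo k 𝔪 ρ` holds iff `ρ` is a path in the `bt`-Weingarten graph from the
pair partition `𝔪 ∈ 𝒫_k` to the empty pair partition. -/
def IsPathTo : (k : ℕ) → PairPartition k → List WStep → Prop
  | 0, _, [] => True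
  | _ + 1, _, [] => False
  | 0, _, _ :: _ => False
  | k + 1, m, WStep.A i :: ρ =>
      1 ≤ i ∧ i ≤ 2 * (k + 1) - 2 ∧ IsPathTo (k + 1) (swapAct i (2 * (k + 1) - 1) m) ρ
  | k + 1, m, WStep.B :: ρ =>
      m.f (2 * (k + 1) - 1) = 2 * (k + 1) ∧ IsPathTo k (down m) ρ
  | k + 1, m, WStep.C i :: ρ =>
      1 ≤ i ∧ i ≤ 2 * (k + 1) - 2 ∧ m.f i = 2 * (k + 1) ∧
        IsPathTo k (down (swapAct i (2 * (k + 1) - 1) m)) ρ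

/-- The product of the `b`-dependent edge weights along a path. -/
noncomputable def pathWeight {R : Type*} [CommRing R] (b : R) :
    (k : ℕ) → PairPartition k → List WStep → R
  | _, _, [] => 1
  | 0, _, _ :: _ => 1
  | k + 1, m, WStep.A i :: ρ =>
      omegab b m i (2 * (k + 1) - 1) * pathWeight b (k + 1) (swapAct i (2 * (k + 1) - 1) m) ρ
  | k + 1, m, WStep.B :: ρ => pathWeight b k (down m) ρ
  | k + 1, m, WStep.C i :: ρ => pathWeight b k (down (swapAct i (2 * (k + 1) - 1) m)) ρ

/-- The number of type-A edges of a path. -/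
def countA (l : List WStep) : ℕ :=
  (l.filter fun s => match s with | WStep.A _ => true | _ => false).length

/-- The number of type-B edges of a path. -/
def countB (l : List WStep) : ℕ :=
  (l.filter fun s => match s with | WStep.B => true | _ => false).length

/-- The number of type-C edges of a path. -/
def countC (l : List WStep) : ℕ :=
  (l.filter fun s => match s with | WStep.C _ => true | _ => false).length

/-- The `b`-Weingarten function `Wg^(b)(𝔪) ∈ ℤ[b]⟦X⟧`: the coefficient of `X^n` is the
sum of `(-1)^{ℓ_A(ρ)} w(ρ)` over all paths `ρ` (with no type-C edges, i.e. paths in the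
`b`-Weingarten graph) from `𝔪` to the empty pair partition with `ℓ_A(ρ) + ℓ_B(ρ) = n`.
Here `b` is the polynomial variable of `ℤ[b]`. -/
noncomputable def WgB (k : ℕ) (m : PairPartition k) : PowerSeries (Polynomial ℤ) :=
  PowerSeries.mk fun n =>
    ∑ᶠ (ρ : List WStep)
      (_ : IsPathTo k m ρ ∧ (∀ i, WStep.C i ∉ ρ) ∧ countA ρ + countB ρ = n),
      (-1 : Polynomial ℤ) ^ countA ρ * pathWeight (Polynomial.X : Polynomial ℤ) k m ρ

/-- The `bt`-Weingarten function `Wg^(bt)(𝔪) ∈ (ℤ[b,y])⟦X⟧`: the coefficient of `X^n` is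
the sum of `(-1)^{ℓ_A(ρ)} y^{ℓ_B(ρ)} w(ρ)` over all paths `ρ` in the `bt`-Weingarten graph
from `𝔪` to the empty pair partition with `ℓ_A(ρ) + ℓ_C(ρ) = n`.  Here `b = X 0` and
`y = X 1` in `ℤ[b,y] = MvPolynomial (Fin 2) ℤ`. -/
noncomputable def WgBT (k : ℕ) (m : PairPartition k) :
    PowerSeries (MvPolynomial (Fin 2) ℤ) :=
  PowerSeries.mk fun n =>
    ∑ᶠ (ρ : List WStep) (_ : IsPathTo k m ρ ∧ countA ρ + countC ρ = n),
      (-1 : MvPolynomial (Fin 2) ℤ) ^ countA ρ * (MvPolynomial.X 1) ^ countB ρ *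
        pathWeight (MvPolynomial.X 0 : MvPolynomial (Fin 2) ℤ) k m ρ

/-- The standard basis vector `𝔪` of the free module with basis `𝒫_k`,
realised as functions `𝒫_k → R`. -/
noncomputable def basisVec {R : Type*} [CommRing R] (k : ℕ) (m : PairPartition k) :
    PairPartition k → R :=
  fun n => if n = m then 1 else 0

/-- The `b`-deformed Jucys–Murphy operator `𝒥_i` acting on the free module with basis
`𝒫_k` (realised as functions `𝒫_k → R`): on basis vectors,
`𝒥_i(𝔪) = ∑_{a=1}^{2i-2} ω^(b)((a 2i-1)·𝔪, 𝔪) · (a 2i-1)·𝔪`. -/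
noncomputable def JbOp {R : Type*} [CommRing R] (b : R) {k : ℕ} (i : ℕ)
    (v : PairPartition k → R) : PairPartition k → R :=
  fun n => ∑ a ∈ Finset.Icc 1 (2 * i - 2),
    omegab b n a (2 * i - 1) * v (swapAct a (2 * i - 1) n)

/-- The (odd) Jucys–Murphy element `J_{2i-1} = ∑_{a=1}^{2i-2} (a
 2i-1)` of the group
algebra of `S_{2k}`, acting on the free module with basis `𝒫_k` via the linear extension
of the `S_{2k}`-action on pair partitions. -/
noncomputable def JoddOp {R : Type*} [CommRing R] {k : ℕ} (i : ℕ)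
    (v : PairPartition k → R) : PairPartition k → R :=
  fun n => ∑ a ∈ Finset.Icc 1 (2 * i - 2), v (swapAct a (2 * i - 1) n)

/-- The vector `𝔭_μ = ∑_{𝔪 : λ(𝔪) = μ} 𝔪`, i.e. the indicator function of the set of
pair partitions of coset-type `μ`. -/
noncomputable def pVec {R : Type*} [CommRing R] (k : ℕ) (μ : Multiset ℕ) :
    PairPartition k → R :=
  fun m => if HasCosetType m μ then 1 else 0

noncomputable def applyPows {R : Type*} [CommRing R] (b : R) {k : ℕ} :
    List (ℕ × ℕ) → (PairPartition k → R) → (PairPartition k → R)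
  | [], v => v
  | ia :: rest, v => (JbOp b ia.1)^[ia.2] (applyPows b rest v)


/-- The coefficient ring `ℤ[b,y]⟦X⟧`, with `b = X 0` and `y = X 1`. -/
abbrev SeriesRing := PowerSeries (MvPolynomial (Fin 2) ℤ)

noncomputable def bS : SeriesRing := PowerSeries.C (MvPolynomial.X 0)
noncomputable def yS : SeriesRing := PowerSeries.C (MvPolynomial.X 1)

/-- The operator-valued power series `(1 + X·𝒥_i)⁻¹ = ∑_{j ≥ 0} (-X)^j 𝒥_i^j`
applied to a vector `v`, computed coefficientwise. -/
noncomputable def invApply (k : ℕ) (i : ℕ) (v : PairPartition k → SeriesRing) :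
    PairPartition k → SeriesRing :=
  fun n => PowerSeries.mk fun d =>
    ∑ᶠ j : ℕ, PowerSeries.coeff d
      ((-(PowerSeries.X : SeriesRing)) ^ j * ((JbOp bS i)^[j] v) n)

/-- The vector `(y + X𝒥_j)(1 + X𝒥_j)⁻¹ ⋯ (y + X𝒥_1)(1 + X𝒥_1)⁻¹ (𝔢_k)`. -/
noncomputable def prodVec (k : ℕ) : ℕ → (PairPartition k → SeriesRing)
  | 0 => fun n => if n = triv k then 1 else 0
  | j + 1 => fun n =>
      yS * invApply k (j + 1) (prodVec k j) n +
        PowerSeries.X * (JbOp bS (j + 1) (invApply k (j + 1) (prodVec k j))) n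


open MvPolynomial

/-- The formal partial derivative `∂_n = ∂/∂p_n` on the polynomial ring
`K[p_1, p_2, …]` (the variables being indexed by positive naturals);
junk value `0` for `n = 0`. -/
noncomputable def pd (K : Type*) [CommRing K] (n : ℕ) :
    MvPolynomial ℕ+ K →ₗ[K] MvPolynomial ℕ+ K :=
  if h : 0 < n then (pderiv (⟨n, h⟩ : ℕ+)).toLinearMap else 0

/-- The variable `p_n` of `K[p_1, p_2, …]`; junk value `0` for `n = 0`. -/
noncomputable def pvar (K : Type*) [CommRing K] (n : ℕ) : MvPolynomial ℕ+ K :=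
  if h : 0 < n then X ⟨n, h⟩ else 0

section SumOp

variable (K : Type*) [CommRing K]

lemma sumOp_support_subset (m : ℕ) (f : MvPolynomial ℕ+ K) :
    (Function.support fun i => ((i + m : ℕ) : K) • (pvar K i * pd K (i + m) f)) ⊆
      ((fun i => i + m) ⁻¹' ↑(f.vars.image (fun v : ℕ+ => (v : ℕ)))) := by
  intro i hi
  simp only [Function.mem_support] at hi
  by_contra hmem
  apply hi
  rcases Nat.eq_zero_or_pos (i + m) with h0 | h0
  · have hi0 : i = 0 := by omega
    subst hi0
    simp [pvar]
  · have hnot : (⟨i + m, h0⟩ : ℕ+) ∉ f.vars := by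
      intro hv
      apply hmem
      simp only [Set.mem_preimage, Finset.coe_image, Set.mem_image, Finset.mem_coe]
      exact ⟨⟨i + m, h0⟩, hv, rfl⟩
    have hz : pd K (i + m) f = 0 := by
      have := pderiv_eq_zero_of_notMem_vars (R := K) hnot
      have e : pd K (i + m) = (pderiv (⟨i + m, h0⟩ : ℕ+)).toLinearMap := dif_pos h0
      rw [e]
      exact this
    rw [hz, mul_zero, smul_zero]

lemma sumOp_support_finite (m : ℕ) (f : MvPolynomial ℕ+ K) :
    (Function.support fun i => ((i + m : ℕ) : K) • (pvar K i * pd K (i + m) f)).Finite := by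
  apply Set.Finite.subset _ (sumOp_support_subset K m f)
  apply Set.Finite.preimage
  · exact (add_left_injective m).injOn
  · exact (f.vars.image (fun v : ℕ+ => (v : ℕ))).finite_toSet

/-- The operator `∑_{i ≥ 1} (i+m) p_i ∂_{i+m}` on `K[p_1, p_2, …]`
(a well-defined linear operator, the sum being locally finite on polynomials). -/
noncomputable def sumOp (m : ℕ) : MvPolynomial ℕ+ K →ₗ[K] MvPolynomial ℕ+ K where
  toFun f := ∑ᶠ i : ℕ, ((i + m : ℕ) : K) • (pvar K i * pd K (i + m) f)
  map_add' x y := by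
    have key : ∀ i : ℕ, ((i + m : ℕ) : K) • (pvar K i * pd K (i + m) (x + y)) =
        ((i + m : ℕ) : K) • (pvar K i * pd K (i + m) x) +
          ((i + m : ℕ) : K) • (pvar K i * pd K (i + m) y) := by
      intro i
      rw [map_add, mul_add, smul_add]
    try dsimp only
    rw [finsum_congr key]
    exact finsum_add_distrib (sumOp_support_finite K m x) (sumOp_support_finite K m y)
  map_smul' c x := by
    have key : ∀ i : ℕ, ((i + m : ℕ) : K) • (pvar K i * pd K (i + m) (c • x)) =
        c • (((i + m : ℕ) : K) • (pvar K i * pd K (i + m) x)) := by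
      intro i
      rw [_root_.map_smul, smul_comm]
      congr 1
      rw [mul_smul_comm]
    try dsimp only
    rw [finsum_congr key]
    simp only [RingHom.id_apply]
    exact (smul_finsum' c (sumOp_support_finite K m x)).symm
end SumOp

/-- The `bt`-deformed Virasoro-type operator `L_m` of Theorem 3.5/4.7, acting on the
polynomial ring `K[p_1, p_2, …]`. -/
noncomputable def Lop (K : Type*) [CommRing K] (b t z hbar : K) (m : ℕ) :
    MvPolynomial ℕ+ K →ₗ[K] MvPolynomial ℕ+ K :=
  (((m : K) * Ring.inverse hbar) • pd K m)
    - (1 + b) • (∑ i ∈ Finset.Ioo 0 m,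
        (((i : ℕ) : K) * (((m - i : ℕ)) : K)) • (pd K i ∘ₗ pd K (m - i)))
    - sumOp K m
    - ((b * (m : K) * ((m - 1 : ℕ) : K)) • pd K m)
    - ((z * Ring.inverse hbar * (t - 1) * ((m - 1 : ℕ) : K)) • pd K (m - 1))
    - (if m = 1 then (z * Ring.inverse hbar * Ring.inverse hbar * Ring.inverse (1 + b)) •
        (LinearMap.id : MvPolynomial ℕ+ K →ₗ[K] MvPolynomial ℕ+ K) else 0)
open PairPartition

/-- `i : {1,…,2k} → {1,…,N}` is admissible for `𝔪`: `{a,b} ∈ 𝔪` implies `i a = i b`. -/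
def Admissible {N : ℕ} (k : ℕ) (m : PairPartition k) (i : ℕ → Fin N) : Prop :=
  ∀ a, 1 ≤ a → a ≤ 2 * k → i (m.f a) = i a

/-- `i : {1,…,2k} → {1,…,N}` is strongly admissible for `𝔪`:
for `a, b ∈ {1,…,2k}`, `i a = i b` holds iff `a = b` or `{a,b} ∈ 𝔪`. -/
def StronglyAdmissible {N : ℕ} (k : ℕ) (m : PairPartition k) (i : ℕ → Fin N) : Prop :=
  ∀ a b, 1 ≤ a → a ≤ 2 * k → 1 ≤ b → b ≤ 2 * k → (i a = i b ↔ (a = b ∨ m.f a = b))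

/-- `ĥ^{(t)}_r(𝔪)` evaluated at a real number `t`: the weighted count
`∑_{τ ∈ Mono(𝔪), ℓ(τ) = r} t^{hive(τ)}`. -/
noncomputable def hiveSum {k : ℕ} (m : PairPartition k) (r : ℕ) (t : ℝ) : ℝ :=
  ∑ l ∈ monoFinset m r, t ^ hive l

/-- The `bt`-monotone count `∑_{τ ∈ Mono(𝔪), ℓ(τ) = r} b^{flip(τ)} t^{hive(τ)}`
in `ℤ[b,t]`, with `b = X 0` and `t = X 1`. -/
noncomputable def btSum {k : ℕ} (m : PairPartition k) (r : ℕ) : MvPolynomial (Fin 2) ℤ :=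
  ∑ l ∈ monoFinset m r,
    (MvPolynomial.X 0 : MvPolynomial (Fin 2) ℤ) ^ (flip m l) *
      (MvPolynomial.X 1) ^ (hive l)

/-- The connected `bt`-monotone count
`∑_{τ ∈ CMono(𝔪), ℓ(τ) = r} b^{flip(τ)} t^{hive(τ)}` in `ℚ[b,t]`,
with `b = X 0` and `t = X 1`. -/
noncomputable def cMonoSum {k : ℕ} (m : PairPartition k) (r : ℕ) : MvPolynomial (Fin 2) ℚ :=
  ∑ l ∈ (monoFinset m r).filter (fun l => IsConnectedFact k l),
    (MvPolynomial.X 0 : MvPolynomial (Fin 2) ℚ) ^ (flip m l) *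
      (MvPolynomial.X 1) ^ (hive l)

/-- The operator `c + J_{2i-1}` on the free module with basis `𝒫_k`. -/
noncomputable def affJoddOp {k : ℕ} (c : ℝ) (i : ℕ) (v : PairPartition k → ℝ) :
    PairPartition k → ℝ :=
  fun n => c * v n + JoddOp i v n

namespace WgAux

lemma exists_fiber_bij {α β : Type*} [Nonempty β] :
    ∀ (n : ℕ) (A : Finset α) (B : Finset β) (f : α → ℕ) (g : β → ℕ), A.card = n →
    (∀ c : ℕ, (A.filter (fun a => f a = c)).card = (B.filter (fun b => g b = c)).card) →
    ∃ e : α → β, Set.BijOn e ↑A ↑B ∧ ∀ a ∈ A, g (e a) = f a := by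
  intro n
  induction n with
  | zero =>
    intro A B f g hcard hfib
    have hA : A = ∅ := Finset.card_eq_zero.mp hcard
    have hB : B = ∅ := by
      by_contra hB
      obtain ⟨b, hb⟩ := Finset.nonempty_iff_ne_empty.mpr hB
      have h1 : 0 < (B.filter (fun b' => g b' = g b)).card :=
        Finset.card_pos.mpr ⟨b, Finset.mem_filter.mpr ⟨hb, rfl⟩⟩
      rw [← hfib] at h1
      subst hA; simp at h1
    subst hA hB
    exact ⟨fun _ => Classical.arbitrary β, by simp [Set.BijOn], by simp⟩
  | succ n ih =>
    intro A B f g hcard hfib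
    obtain ⟨a, ha⟩ := Finset.card_pos.mp (by omega : 0 < A.card)
    have hBf : 0 < (B.filter (fun b => g b = f a)).card := by
      rw [← hfib]
      exact Finset.card_pos.mpr ⟨a, Finset.mem_filter.mpr ⟨ha, rfl⟩⟩
    obtain ⟨b, hb⟩ := Finset.card_pos.mp hBf
    rw [Finset.mem_filter] at hb
    obtain ⟨hbB, hgb⟩ := hb
    have hcard' : (A.erase a).card = n := by
      rw [Finset.card_erase_of_mem ha, hcard]
      omega
    have hfib' : ∀ c : ℕ, ((A.erase a).filter (fun x => f x = c)).card =
        ((B.erase b).filter (fun y => g y = c)).card := by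
      intro c
      rw [Finset.filter_erase, Finset.filter_erase]
      by_cases hc : f a = c
      · rw [Finset.card_erase_of_mem (Finset.mem_filter.mpr ⟨ha, hc⟩),
          Finset.card_erase_of_mem (Finset.mem_filter.mpr ⟨hbB, by rw [hgb, hc]⟩), hfib]
      · rw [Finset.erase_eq_of_notMem, Finset.erase_eq_of_notMem, hfib]
        · intro h; exact hc (by rw [← hgb]; exact (Finset.mem_filter.mp h).2)
        · intro h; exact hc (Finset.mem_filter.mp h).2
    obtain ⟨e, he, hge⟩ := ih (A.erase a) (B.erase b) f g hcard' hfib'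
    refine ⟨Function.update e a b, ?_, ?_⟩
    · constructor
      · intro x hx
        simp only [Finset.coe_insert, Set.mem_insert_iff, Finset.mem_coe] at hx ⊢
        by_cases hxa : x = a
        · subst hxa; simp [Function.update_self]; exact hbB
        · rw [Function.update_of_ne hxa]
          exact Finset.mem_of_mem_erase (he.1 (by simp [Finset.mem_erase, hxa]; exact hx))
      constructor
      · intro x hx y hy hxy
        simp only [Finset.mem_coe] at hx hy
        by_cases hxa : x = a <;> by_cases hya : y = a
        · rw [hxa, hya]
        · exfalso
          rw [hxa, Function.update_self, Function.update_of_ne hya] at hxy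
          have : e y ∈ B.erase b := he.1 (by simp [Finset.mem_erase, hya, hy])
          rw [← hxy] at this
          exact (Finset.mem_erase.mp this).1 rfl
        · exfalso
          rw [hya, Function.update_self, Function.update_of_ne hxa] at hxy
          have : e x ∈ B.erase b := he.1 (by simp [Finset.mem_erase, hxa, hx])
          rw [hxy] at this
          exact (Finset.mem_erase.mp this).1 rfl
        · rw [Function.update_of_ne hxa, Function.update_of_ne hya] at hxy
          exact he.2.1 (by simp [Finset.mem_erase, hxa, hx]) (by simp [Finset.mem_erase, hya, hy]) hxy
      · intro y hy
        simp only [Finset.mem_coe] at hy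
        by_cases hyb : y = b
        · exact ⟨a, by simp [Finset.mem_coe, ha], by rw [Function.update_self, hyb]⟩
        · obtain ⟨x, hx, hex⟩ := he.2.2 (by simp [Finset.mem_erase, hyb, hy] : y ∈ (↑(B.erase b) : Set β))
          have hx' : x ∈ A.erase a := Finset.mem_coe.mp hx
          refine ⟨x, ?_, ?_⟩
          · exact Finset.mem_coe.mpr (Finset.mem_of_mem_erase hx')
          · have hxa : x ≠ a := (Finset.mem_erase.mp hx').1
            rw [Function.update_of_ne hxa]; exact hex
    · intro x hx
      by_cases hxa : x = a
      · subst hxa; rw [Function.update_self, hgb]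
      · rw [Function.update_of_ne hxa]
        exact hge x (Finset.mem_erase.mpr ⟨hxa, hx⟩)

end WgAux

open PairPartition

namespace WgAux

variable {k : ℕ}

/-- The rotation `ρ = 𝔪 ∘ 𝔢`. -/
def rho (m : PairPartition k) : Equiv.Perm ℕ := m.perm * (triv k).perm

lemma perm_apply (m : PairPartition k) (a : ℕ) : m.perm a = m.f a := rfl

lemma perm_mul_self (m : PairPartition k) : m.perm * m.perm = 1 := by
  ext a; simp [perm_apply, Equiv.Perm.mul_apply, m.invol]

lemma perm_inv (m : PairPartition k) : m.perm⁻¹ = m.perm := by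
  rw [inv_eq_iff_mul_eq_one, perm_mul_self]

lemma rho_apply (m : PairPartition k) (a : ℕ) : rho m a = m.f (trivFun k a) := rfl

lemma rho_inv (m : PairPartition k) : (rho m)⁻¹ = (triv k).perm * m.perm := by
  rw [rho, mul_inv_rev, perm_inv, perm_inv]

lemma triv_conj_rho (m : PairPartition k) :
    (triv k).perm * rho m * (triv k).perm = (rho m)⁻¹ := by
  rw [rho_inv, rho]
  ext a
  simp only [Equiv.Perm.mul_apply, perm_apply]
  rw [(triv k).invol]

lemma triv_conj_rho_zpow (m : PairPartition k) (s : ℤ) :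
    (triv k).perm * (rho m) ^ s * (triv k).perm = (rho m) ^ (-s) := by
  have h1 : (triv k).perm⁻¹ = (triv k).perm := perm_inv _
  have h2 : (MulAut.conj ((triv k).perm)) ((rho m) ^ s) =
      ((MulAut.conj ((triv k).perm)) (rho m)) ^ s := map_zpow _ _ _
  simp only [MulAut.conj_apply, h1] at h2
  rw [h2, triv_conj_rho, inv_zpow, ← zpow_neg]

lemma trivperm_apply (a : ℕ) : (triv k).perm a = trivFun k a := rfl

lemma trivFun_invol' : ∀ a : ℕ, trivFun k (trivFun k a) = a := (triv k).invol

lemma triv_apply_zpow (m : PairPartition k) (s : ℤ) (x : ℕ) :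
    trivFun k (((rho m) ^ s) x) = ((rho m) ^ (-s)) (trivFun k x) := by
  have h3 := congrArg (fun σ => σ (trivFun k x)) (triv_conj_rho_zpow m s)
  simp only [Equiv.Perm.mul_apply, trivperm_apply, trivFun_invol'] at h3
  exact h3

/-- Membership interval. -/
lemma mf_mem (m : PairPartition k) {a : ℕ} (ha : a ∈ Finset.Icc 1 (2 * k)) :
    m.f a ∈ Finset.Icc 1 (2 * k) := by
  simp only [Finset.mem_Icc] at ha ⊢
  have h1 : m.f a ≠ a := (m.moves a).mpr ha
  have h2 : m.f (m.f a) ≠ m.f a := by rw [m.invol]; exact fun h => h1 h.symm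
  exact (m.moves (m.f a)).mp h2

lemma mf_fix (m : PairPartition k) {a : ℕ} (ha : a ∉ Finset.Icc 1 (2 * k)) :
    m.f a = a := by
  by_contra h
  exact ha (Finset.mem_Icc.mpr ((m.moves a).mp h))

lemma trivFun_mem {a : ℕ} (ha : a ∈ Finset.Icc 1 (2 * k)) :
    trivFun k a ∈ Finset.Icc 1 (2 * k) := mf_mem (triv k) ha

lemma trivFun_invol (a : ℕ) : trivFun k (trivFun k a) = a := (triv k).invol a

lemma trivFun_ne {a : ℕ} (ha : a ∈ Finset.Icc 1 (2 * k)) : trivFun k a ≠ a :=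
  ((triv k).moves a).mpr (Finset.mem_Icc.mp ha)

lemma rho_mem (m : PairPartition k) {a : ℕ} (ha : a ∈ Finset.Icc 1 (2 * k)) :
    rho m a ∈ Finset.Icc 1 (2 * k) := mf_mem m (trivFun_mem ha)

/-- The generating subgroup. -/
def G (m : PairPartition k) : Subgroup (Equiv.Perm ℕ) :=
  Subgroup.closure {(triv k).perm, m.perm}

lemma gammaOrbit_def (m : PairPartition k) (v : ℕ) :
    gammaOrbit m v = MulAction.orbit (G m) v := rfl

lemma mem_G_triv (m : PairPartition k) : (triv k).perm ∈ G m :=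
  Subgroup.subset_closure (by simp)

lemma mem_G_m (m : PairPartition k) : m.perm ∈ G m :=
  Subgroup.subset_closure (by simp)

lemma mem_G_rho (m : PairPartition k) : rho m ∈ G m :=
  mul_mem (mem_G_m m) (mem_G_triv m)

lemma G_iff_Icc (m : PairPartition k) {σ : Equiv.Perm ℕ} (hσ : σ ∈ G m) :
    ∀ x : ℕ, σ x ∈ Finset.Icc 1 (2 * k) ↔ x ∈ Finset.Icc 1 (2 * k) := by
  refine Subgroup.closure_induction ?_ ?_ ?_ ?_ hσ
  · intro σ hσ x
    rcases hσ with h | h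
    · subst h
      constructor
      · intro hx
        by_contra hx'
        rw [perm_apply, mf_fix _ hx'] at hx
        exact hx' hx
      · intro hx; rw [perm_apply]; exact mf_mem _ hx
    · simp only [Set.mem_singleton_iff] at h
      subst h
      constructor
      · intro hx
        by_contra hx'
        rw [perm_apply, mf_fix _ hx'] at hx
        exact hx' hx
      · intro hx; rw [perm_apply]; exact mf_mem _ hx
  · intro x; simp
  · intro σ τ _ _ hσ hτ x
    simp only [Equiv.Perm.mul_apply]
    rw [hσ, hτ]
  · intro σ _ hσ x
    have := hσ (σ⁻¹ x)
    simp only [Equiv.Perm.coe_inv, Equiv.apply_symm_apply] at this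
    exact this.symm

lemma gammaOrbit_subset_Icc (m : PairPartition k) {v : ℕ}
    (hv : v ∈ Finset.Icc 1 (2 * k)) : gammaOrbit m v ⊆ ↑(Finset.Icc 1 (2 * k)) := by
  rintro x ⟨⟨σ, hσ⟩, rfl⟩
  exact Finset.mem_coe.mpr (((G_iff_Icc m hσ) v).mpr hv)

lemma self_mem_gammaOrbit (m : PairPartition k) (v : ℕ) : v ∈ gammaOrbit m v :=
  MulAction.mem_orbit_self v

lemma gammaOrbit_eq_of_mem (m : PairPartition k) {v x : ℕ} (hx : x ∈ gammaOrbit m v) :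
    gammaOrbit m x = gammaOrbit m v := by
  rw [gammaOrbit_def, gammaOrbit_def]
  exact MulAction.orbit_eq_iff.mpr hx

/-- The dihedral decomposition subgroup. -/
def Dcarrier (m : PairPartition k) : Set (Equiv.Perm ℕ) :=
  {σ | ∃ s : ℤ, σ = (rho m) ^ s ∨ σ = (rho m) ^ s * (triv k).perm}

lemma triv_mul_rho_zpow (m : PairPartition k) (s : ℤ) :
    (triv k).perm * (rho m) ^ s = (rho m) ^ (-s) * (triv k).perm := by
  have := triv_conj_rho_zpow m s
  calc (triv k).perm * (rho m) ^ s
      = ((triv k).perm * (rho m) ^ s * (triv k).perm) * (triv k).perm := by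
        rw [mul_assoc, mul_assoc, perm_mul_self, mul_one]
    _ = (rho m) ^ (-s) * (triv k).perm := by rw [this]

def D (m : PairPartition k) : Subgroup (Equiv.Perm ℕ) where
  carrier := Dcarrier m
  one_mem' := ⟨0, Or.inl (by simp)⟩
  mul_mem' := by
    rintro σ τ ⟨s, hs | hs⟩ ⟨t, ht | ht⟩ <;> subst hs <;> subst ht
    · exact ⟨s + t, Or.inl (by rw [zpow_add])⟩
    · exact ⟨s + t, Or.inr (by rw [zpow_add, mul_assoc])⟩
    · refine ⟨s + (-t), Or.inr ?_⟩
      calc (rho m) ^ s * (triv k).perm * (rho m) ^ t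
          = (rho m) ^ s * ((triv k).perm * (rho m) ^ t) := mul_assoc _ _ _
        _ = (rho m) ^ s * ((rho m) ^ (-t) * (triv k).perm) := by rw [triv_mul_rho_zpow]
        _ = ((rho m) ^ s * (rho m) ^ (-t)) * (triv k).perm := (mul_assoc _ _ _).symm
        _ = (rho m) ^ (s + -t) * (triv k).perm := by rw [← zpow_add]
    · refine ⟨s + (-t), Or.inl ?_⟩
      calc (rho m) ^ s * (triv k).perm * ((rho m) ^ t * (triv k).perm)
          = (rho m) ^ s * (((triv k).perm * (rho m) ^ t) * (triv k).perm) := by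
            simp only [mul_assoc]
        _ = (rho m) ^ s * (((rho m) ^ (-t) * (triv k).perm) * (triv k).perm) := by
            rw [triv_mul_rho_zpow]
        _ = (rho m) ^ s * (rho m) ^ (-t) := by rw [mul_assoc, perm_mul_self, mul_one]
        _ = (rho m) ^ (s + -t) := (zpow_add _ _ _).symm
  inv_mem' := by
    rintro σ ⟨s, hs | hs⟩ <;> subst hs
    · exact ⟨-s, Or.inl (by rw [zpow_neg])⟩
    · refine ⟨s, Or.inr ?_⟩
      calc ((rho m) ^ s * (triv k).perm)⁻¹
          = (triv k).perm⁻¹ * ((rho m) ^ s)⁻¹ := mul_inv_rev _ _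
        _ = (triv k).perm * (rho m) ^ (-s) := by rw [perm_inv, ← zpow_neg]
        _ = (rho m) ^ (-(-s)) * (triv k).perm := triv_mul_rho_zpow _ _
        _ = (rho m) ^ s * (triv k).perm := by rw [neg_neg]

lemma G_le_D (m : PairPartition k) : G m ≤ D m := by
  rw [G, Subgroup.closure_le]
  rintro σ (h | h)
  · exact ⟨0, Or.inr (by simp [h])⟩
  · simp only [Set.mem_singleton_iff] at h
    refine ⟨1, Or.inr ?_⟩
    rw [h, rho, zpow_one, mul_assoc, perm_mul_self, mul_one]

/-- The half-orbit `{ρ^s r : s ∈ ℤ}`. -/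
def SOrb (m : PairPartition k) (r : ℕ) : Set ℕ := {x | ∃ s : ℤ, ((rho m) ^ s) r = x}

lemma orbit_decomp (m : PairPartition k) (v : ℕ) :
    gammaOrbit m v = SOrb m v ∪ trivFun k '' SOrb m v := by
  ext x
  constructor
  · rintro ⟨⟨σ, hσ⟩, rfl⟩
    obtain ⟨s, hs | hs⟩ := G_le_D m hσ <;> subst hs
    · exact Or.inl ⟨s, rfl⟩
    · right
      refine ⟨((rho m) ^ (-s)) v, ⟨-s, rfl⟩, ?_⟩
      show trivFun k (((rho m) ^ (-s)) v) = ((rho m) ^ s * (triv k).perm) v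
      rw [triv_apply_zpow, neg_neg]
      simp [Equiv.Perm.mul_apply, trivperm_apply]
  · rintro (⟨s, rfl⟩ | ⟨y, ⟨s, rfl⟩, rfl⟩)
    · exact ⟨⟨(rho m) ^ s, zpow_mem (mem_G_rho m) s⟩, rfl⟩
    · refine ⟨⟨(rho m) ^ (-s) * (triv k).perm, mul_mem (zpow_mem (mem_G_rho m) _) (mem_G_triv m)⟩, ?_⟩
      show ((rho m) ^ (-s) * (triv k).perm) v = trivFun k (((rho m) ^ s) v)
      rw [triv_apply_zpow]
      simp [Equiv.Perm.mul_apply, trivperm_apply]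

end WgAux

namespace WgAux

variable {k : ℕ}

/-- Half cycle length at a point. -/
noncomputable def npoint (m : PairPartition k) (r : ℕ) : ℕ :=
  Function.minimalPeriod ⇑(rho m) r

lemma iterate_mem (m : PairPartition k) {r : ℕ} (hr : r ∈ Finset.Icc 1 (2 * k)) :
    ∀ s : ℕ, (⇑(rho m))^[s] r ∈ Finset.Icc 1 (2 * k) := by
  intro s
  induction s with
  | zero => simpa using hr
  | succ n ih =>
      rw [Function.iterate_succ_apply']
      exact rho_mem m ih

lemma mem_periodicPts (m : PairPartition k) {r : ℕ} (hr : r ∈ Finset.Icc 1 (2 * k)) :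
    r ∈ Function.periodicPts ⇑(rho m) := by
  obtain ⟨a, ha, b, hb, hab, heq⟩ :=
    Finset.exists_ne_map_eq_of_card_lt_of_maps_to
      (s := Finset.range (2 * k + 1)) (t := Finset.Icc 1 (2 * k))
      (by simp) (fun s _ => iterate_mem m hr s)
  wlog h : a < b generalizing a b
  · exact this b hb a ha (Ne.symm hab) heq.symm (by omega)
  have key : (⇑(rho m))^[a] ((⇑(rho m))^[b - a] r) = (⇑(rho m))^[a] r := by
    rw [← Function.iterate_add_apply]
    rw [show a + (b - a) = b by omega]
    exact heq.symm
  have hinj : Function.Injective (⇑(rho m))^[a] := Function.Injective.iterate (rho m).injective a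
  refine ⟨b - a, by omega, hinj key⟩

lemma npoint_pos (m : PairPartition k) {r : ℕ} (hr : r ∈ Finset.Icc 1 (2 * k)) :
    0 < npoint m r :=
  Function.minimalPeriod_pos_iff_mem_periodicPts.mpr (mem_periodicPts m hr)

lemma iterate_eq_zpow (m : PairPartition k) (r : ℕ) (s : ℕ) :
    (⇑(rho m))^[s] r = ((rho m) ^ (s : ℤ)) r := by
  rw [zpow_natCast, Equiv.Perm.coe_pow]

lemma zpow_apply_mod (m : PairPartition k) {r : ℕ} (hr : r ∈ Finset.Icc 1 (2 * k))
    (s : ℤ) : ((rho m) ^ s) r = (⇑(rho m))^[(s % (npoint m r : ℤ)).toNat] r := by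
  have hnp : (0 : ℤ) < (npoint m r : ℤ) := by exact_mod_cast npoint_pos m hr
  have hstab : ((rho m) ^ (npoint m r : ℤ)) r = r := by
    rw [← iterate_eq_zpow]
    exact Function.iterate_minimalPeriod
  have hstab' : (rho m) ^ (npoint m r : ℤ) ∈ MulAction.stabilizer (Equiv.Perm ℕ) r := by
    simp only [MulAction.mem_stabilizer_iff, Equiv.Perm.smul_def]
    exact hstab
  have hq : ∀ q : ℤ, ((rho m) ^ ((npoint m r : ℤ) * q)) r = r := by
    intro q
    rw [zpow_mul]
    have := zpow_mem hstab' q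
    simpa only [MulAction.mem_stabilizer_iff, Equiv.Perm.smul_def] using this
  have hnz : (npoint m r : ℤ) ≠ 0 := ne_of_gt hnp
  calc ((rho m) ^ s) r
      = ((rho m) ^ (s % (npoint m r : ℤ) + (npoint m r : ℤ) * (s / (npoint m r : ℤ)))) r := by
        rw [Int.emod_add_mul_ediv]
    _ = ((rho m) ^ (s % (npoint m r : ℤ))) (((rho m) ^ ((npoint m r : ℤ) * (s / (npoint m r : ℤ)))) r) := by
        rw [zpow_add, Equiv.Perm.mul_apply]
    _ = ((rho m) ^ (s % (npoint m r : ℤ))) r := by rw [hq]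
    _ = (⇑(rho m))^[(s % (npoint m r : ℤ)).toNat] r := by
        rw [show s % (npoint m r : ℤ) = (((s % (npoint m r : ℤ)).toNat : ℕ) : ℤ) from
          (Int.toNat_of_nonneg (Int.emod_nonneg s hnz)).symm, ← iterate_eq_zpow,
          Int.toNat_natCast]

end WgAux

namespace WgAux

variable {k : ℕ}

lemma not_isPeriodic_lt (m : PairPartition k) {r : ℕ} (hr : r ∈ Finset.Icc 1 (2 * k))
    {u : ℕ} (hu0 : 0 < u) (hu : u < npoint m r) : (⇑(rho m))^[u] r ≠ r := by
  intro h
  have : npoint m r ≤ u := Function.IsPeriodicPt.minimalPeriod_le hu0 h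
  omega

lemma zpow_eq_iff (m : PairPartition k) {r : ℕ} (hr : r ∈ Finset.Icc 1 (2 * k))
    (s t : ℤ) : ((rho m) ^ s) r = ((rho m) ^ t) r ↔ ((npoint m r : ℤ)) ∣ (s - t) := by
  have hnp : (0 : ℤ) < (npoint m r : ℤ) := by exact_mod_cast npoint_pos m hr
  constructor
  · intro h
    have h2 : ((rho m) ^ (s - t)) r = r := by
      have : ((rho m) ^ (-t)) (((rho m) ^ s) r) = ((rho m) ^ (-t)) (((rho m) ^ t) r) := by
        rw [h]
      rw [← Equiv.Perm.mul_apply, ← Equiv.Perm.mul_apply, ← zpow_add, ← zpow_add] at this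
      rw [show (-t) + s = s - t by ring] at this
      simpa using this
    rw [zpow_apply_mod m hr] at h2
    set u := ((s - t) % (npoint m r : ℤ)).toNat with hu
    by_contra hdvd
    have hu0 : 0 < u := by
      rcases Nat.eq_zero_or_pos u with h0 | h0
      · exfalso
        apply hdvd
        have : (s - t) % (npoint m r : ℤ) = 0 := by
          have hnn : 0 ≤ (s - t) % (npoint m r : ℤ) := Int.emod_nonneg _ (ne_of_gt hnp)
          omega
        exact Int.dvd_of_emod_eq_zero this
      · exact h0
    have hult : u < npoint m r := by
      have := Int.emod_lt_of_pos (s - t) hnp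
      have hnn : 0 ≤ (s - t) % (npoint m r : ℤ) := Int.emod_nonneg _ (ne_of_gt hnp)
      omega
    exact not_isPeriodic_lt m hr hu0 hult h2
  · intro hdvd
    have hmod : s % (npoint m r : ℤ) = t % (npoint m r : ℤ) :=
      (Int.modEq_iff_dvd.mpr hdvd).symm
    rw [zpow_apply_mod m hr, zpow_apply_mod m hr, hmod]

/-- The finset version of the half-orbit. -/
noncomputable def SOrbF (m : PairPartition k) (r : ℕ) : Finset ℕ :=
  (Finset.range (npoint m r)).image (fun s => (⇑(rho m))^[s] r)

lemma SOrb_eq_finset (m : PairPartition k) {r : ℕ} (hr : r ∈ Finset.Icc 1 (2 * k)) :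
    SOrb m r = ↑(SOrbF m r) := by
  ext x
  constructor
  · rintro ⟨s, rfl⟩
    rw [zpow_apply_mod m hr]
    refine Finset.mem_coe.mpr (Finset.mem_image.mpr ⟨(s % (npoint m r : ℤ)).toNat, ?_, rfl⟩)
    rw [Finset.mem_range]
    have hnp : (0 : ℤ) < (npoint m r : ℤ) := by exact_mod_cast npoint_pos m hr
    have := Int.emod_lt_of_pos s hnp
    have hnn : 0 ≤ s % (npoint m r : ℤ) := Int.emod_nonneg _ (ne_of_gt hnp)
    omega
  · intro hx
    obtain ⟨s, _, rfl⟩ := Finset.mem_image.mp (Finset.mem_coe.mp hx)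
    exact ⟨(s : ℤ), (iterate_eq_zpow m r s).symm⟩

lemma SOrbF_card (m : PairPartition k) {r : ℕ} (hr : r ∈ Finset.Icc 1 (2 * k)) :
    (SOrbF m r).card = npoint m r := by
  rw [SOrbF, Finset.card_image_of_injOn, Finset.card_range]
  intro s hs t ht h
  simp only [Finset.coe_range, Set.mem_Iio] at hs ht
  simp only at h
  rw [iterate_eq_zpow, iterate_eq_zpow, zpow_eq_iff m hr] at h
  have hnp : (0 : ℤ) < (npoint m r : ℤ) := by exact_mod_cast npoint_pos m hr
  have habs : |(s : ℤ) - (t : ℤ)| < (npoint m r : ℤ) := by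
    rw [abs_lt]
    constructor <;> (push_cast; omega)
  have := Int.eq_zero_of_abs_lt_dvd h habs
  omega

lemma SOrb_subset_Icc (m : PairPartition k) {r : ℕ} (hr : r ∈ Finset.Icc 1 (2 * k)) :
    SOrb m r ⊆ ↑(Finset.Icc 1 (2 * k)) := by
  rw [SOrb_eq_finset m hr]
  intro x hx
  obtain ⟨s, _, rfl⟩ := Finset.mem_image.mp (Finset.mem_coe.mp hx)
  exact Finset.mem_coe.mpr (iterate_mem m hr s)

/-- Key disjointness: the two halves of a cycle do not meet. -/
lemma triv_not_mem_SOrb (m : PairPartition k) {r : ℕ} (hr : r ∈ Finset.Icc 1 (2 * k))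
    {x : ℕ} (hx : x ∈ SOrb m r) : trivFun k x ∉ SOrb m r := by
  rintro ⟨b, hb⟩
  obtain ⟨a, ha⟩ := hx
  subst ha
  -- trivFun k (ρ^a r) = ρ^b r, so ρ^(-a) (e r) = ρ^b r, e r = ρ^(a+b) r
  rw [triv_apply_zpow] at hb
  have hd : trivFun k r = ((rho m) ^ (a + b)) r := by
    have := congrArg (fun y => ((rho m) ^ a) y) hb
    rw [← Equiv.Perm.mul_apply, ← Equiv.Perm.mul_apply, ← zpow_add, ← zpow_add] at this
    simpa using this.symm
  set d : ℤ := a + b with hdd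
  rcases Int.even_or_odd d with ⟨c, hc⟩ | ⟨c, hc⟩
  · -- d = 2c : e fixes ρ^c r
    have hfix : trivFun k (((rho m) ^ c) r) = ((rho m) ^ c) r := by
      have hexp : -c + d = c := by rw [hc]; ring
      rw [triv_apply_zpow, hd, ← Equiv.Perm.mul_apply, ← zpow_add, hexp]
    have hmem : ((rho m) ^ c) r ∈ Finset.Icc 1 (2 * k) := by
      have := SOrb_subset_Icc m hr (⟨c, rfl⟩ : ((rho m) ^ c) r ∈ SOrb m r)
      exact Finset.mem_coe.mp this
    exact trivFun_ne hmem hfix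
  · -- d = 2c+1 : m fixes ρ^(c+1) r
    have hfix : m.f (((rho m) ^ (c+1)) r) = ((rho m) ^ (c+1)) r := by
      have h1 : m.f (((rho m) ^ (c+1)) r) = (rho m) (trivFun k (((rho m) ^ (c+1)) r)) := by
        rw [rho_apply, trivFun_invol]
      rw [h1, triv_apply_zpow, hd]
      have h2 : (rho m) (((rho m) ^ (-(c+1))) (((rho m) ^ d) r)) =
          ((rho m) ^ (1 + (-(c+1) + d))) r := by
        rw [← Equiv.Perm.mul_apply ((rho m) ^ (-(c+1))), ← zpow_add,
          zpow_add (rho m) 1 (-(c+1)+d), zpow_one, Equiv.Perm.mul_apply]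
      rw [h2, show 1 + (-(c+1) + d) = c + 1 by rw [hc]; ring]
    have hmem : ((rho m) ^ (c+1)) r ∈ Finset.Icc 1 (2 * k) := by
      have := SOrb_subset_Icc m hr (⟨c+1, rfl⟩ : ((rho m) ^ (c+1)) r ∈ SOrb m r)
      exact Finset.mem_coe.mp this
    have : m.f (((rho m) ^ (c+1)) r) ≠ ((rho m) ^ (c+1)) r :=
      (m.moves _).mpr (Finset.mem_Icc.mp hmem)
    exact this hfix

/-- The orbit as a finset. -/
noncomputable def orbF (m : PairPartition k) (r : ℕ) : Finset ℕ :=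
  SOrbF m r ∪ (SOrbF m r).image (trivFun k)

lemma trivFun_injective : Function.Injective (trivFun k) :=
  Function.Involutive.injective trivFun_invol'

lemma gammaOrbit_eq_orbF (m : PairPartition k) {v : ℕ} (hv : v ∈ Finset.Icc 1 (2 * k)) :
    gammaOrbit m v = ↑(orbF m v) := by
  rw [orbit_decomp, SOrb_eq_finset m hv, orbF, Finset.coe_union, Finset.coe_image]

lemma orbF_card (m : PairPartition k) {v : ℕ} (hv : v ∈ Finset.Icc 1 (2 * k)) :
    (orbF m v).card = 2 * npoint m v := by
  rw [orbF, Finset.card_union_of_disjoint, SOrbF_card m hv,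
    Finset.card_image_of_injective _ trivFun_injective, SOrbF_card m hv]
  · ring
  · rw [Finset.disjoint_right]
    intro x hx hx'
    obtain ⟨y, hy, rfl⟩ := Finset.mem_image.mp hx
    have hy' : y ∈ SOrb m v := by rw [SOrb_eq_finset m hv]; exact Finset.mem_coe.mpr hy
    have hx'' : trivFun k y ∈ SOrb m v := by
      rw [SOrb_eq_finset m hv]; exact Finset.mem_coe.mpr hx'
    exact triv_not_mem_SOrb m hv hy' hx''

lemma gammaOrbit_ncard (m : PairPartition k) {v : ℕ} (hv : v ∈ Finset.Icc 1 (2 * k)) :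
    (gammaOrbit m v).ncard = 2 * npoint m v := by
  rw [gammaOrbit_eq_orbF m hv, Set.ncard_coe_finset, orbF_card m hv]

end WgAux

namespace WgAux

variable {k : ℕ}

noncomputable def orbitFinset (m : PairPartition k) (ℓ : ℕ) : Finset (Set ℕ) :=
  ((Finset.Icc 1 (2 * k)).filter (fun a => (gammaOrbit m a).ncard = 2 * ℓ)).image
    (fun a => gammaOrbit m a)

lemma triv_mem_orbit (m : PairPartition k) (a : ℕ) :
    trivFun k a ∈ gammaOrbit m a := ⟨⟨(triv k).perm, mem_G_triv m⟩, rfl⟩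

lemma rho_mem_orbit (m : PairPartition k) (a : ℕ) :
    rho m a ∈ gammaOrbit m a := ⟨⟨rho m, mem_G_rho m⟩, rfl⟩

lemma cycleCount_eq (m : PairPartition k) {ℓ : ℕ} (hℓ : 1 ≤ ℓ) :
    cycleCount m ℓ = (orbitFinset m ℓ).card := by
  classical
  set T := (Finset.Icc 1 (2 * k)).filter (fun a => (gammaOrbit m a).ncard = 2 * ℓ) with hT
  have hmaps : ∀ a ∈ T, gammaOrbit m a ∈ T.image (fun a => gammaOrbit m a) :=
    fun a ha => Finset.mem_image_of_mem _ ha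
  have hcard : T.card = ∑ O ∈ T.image (fun a => gammaOrbit m a),
      (T.filter (fun a => gammaOrbit m a = O)).card :=
    Finset.card_eq_sum_card_fiberwise hmaps
  have hfiber : ∀ O ∈ T.image (fun a => gammaOrbit m a),
      (T.filter (fun a => gammaOrbit m a = O)).card = 2 * ℓ := by
    intro O hO
    obtain ⟨a₀, ha₀, rfl⟩ := Finset.mem_image.mp hO
    rw [Finset.mem_filter] at ha₀
    obtain ⟨ha₀E, ha₀n⟩ := ha₀
    have key : T.filter (fun a => gammaOrbit m a = gammaOrbit m a₀) = orbF m a₀ := by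
      ext x
      rw [Finset.mem_filter]
      constructor
      · rintro ⟨-, hx2⟩
        have : x ∈ gammaOrbit m x := self_mem_gammaOrbit m x
        rw [hx2] at this
        rw [← Finset.mem_coe, ← gammaOrbit_eq_orbF m ha₀E]
        exact this
      · intro hx
        have hxo : x ∈ gammaOrbit m a₀ := by
          rw [gammaOrbit_eq_orbF m ha₀E]; exact Finset.mem_coe.mpr hx
        have hxE : x ∈ Finset.Icc 1 (2 * k) :=
          Finset.mem_coe.mp (gammaOrbit_subset_Icc m ha₀E hxo)
        have heq : gammaOrbit m x = gammaOrbit m a₀ := gammaOrbit_eq_of_mem m hxo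
        exact ⟨Finset.mem_filter.mpr ⟨hxE, by rw [heq]; exact ha₀n⟩, heq⟩
    rw [key, orbF_card m ha₀E, ← gammaOrbit_ncard m ha₀E, ha₀n]
  rw [Finset.sum_congr rfl hfiber, Finset.sum_const, smul_eq_mul] at hcard
  show T.card / (2 * ℓ) = _
  rw [hcard, Nat.mul_div_cancel _ (by omega : 0 < 2 * ℓ)]
  rfl

noncomputable def allOrb (m : PairPartition k) : Finset (Set ℕ) :=
  (Finset.Icc 1 (2 * k)).image (fun a => gammaOrbit m a)

lemma mem_allOrb (m : PairPartition k) {a : ℕ} (ha : a ∈ Finset.Icc 1 (2 * k)) :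
    gammaOrbit m a ∈ allOrb m := Finset.mem_image_of_mem _ ha

lemma allOrb_filter (m : PairPartition k) (n : ℕ) :
    (allOrb m).filter (fun O => O.ncard = n) =
      ((Finset.Icc 1 (2 * k)).filter (fun a => (gammaOrbit m a).ncard = n)).image
        (fun a => gammaOrbit m a) := Finset.filter_image

lemma allOrb_spec (m : PairPartition k) {O : Set ℕ} (hO : O ∈ allOrb m) :
    sSup O ∈ O ∧ sSup O ∈ Finset.Icc 1 (2 * k) ∧ gammaOrbit m (sSup O) = O ∧
      O.ncard = 2 * npoint m (sSup O) := by
  obtain ⟨b, hb, rfl⟩ := Finset.mem_image.mp hO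
  have hfin : (gammaOrbit m b).Finite :=
    Set.Finite.subset (Finset.finite_toSet _) (gammaOrbit_subset_Icc m hb)
  have hne : (gammaOrbit m b).Nonempty := ⟨b, self_mem_gammaOrbit m b⟩
  have hmem : sSup (gammaOrbit m b) ∈ gammaOrbit m b := Set.Nonempty.csSup_mem hne hfin
  have hE : sSup (gammaOrbit m b) ∈ Finset.Icc 1 (2 * k) :=
    Finset.mem_coe.mp (gammaOrbit_subset_Icc m hb hmem)
  have heq : gammaOrbit m (sSup (gammaOrbit m b)) = gammaOrbit m b :=
    gammaOrbit_eq_of_mem m hmem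
  refine ⟨hmem, hE, heq, ?_⟩
  rw [← heq, gammaOrbit_ncard m hE, heq]

lemma exists_Phi (m m' : PairPartition k) (hsame : SameCosetType m m') :
    ∃ Φ : Set ℕ → Set ℕ, Set.BijOn Φ ↑(allOrb m) ↑(allOrb m') ∧
      ∀ O ∈ allOrb m, (Φ O).ncard = O.ncard := by
  classical
  have hfib : ∀ n : ℕ, ((allOrb m).filter (fun O => O.ncard = n)).card =
      ((allOrb m').filter (fun O => O.ncard = n)).card := by
    intro n
    by_cases hn : ∃ ℓ : ℕ, 1 ≤ ℓ ∧ n = 2 * ℓ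
    · obtain ⟨ℓ, hℓ, rfl⟩ := hn
      rw [allOrb_filter, allOrb_filter, ← orbitFinset, ← orbitFinset,
        ← cycleCount_eq m hℓ, ← cycleCount_eq m' hℓ]
      exact hsame ℓ
    · have hempty : ∀ (μ : PairPartition k),
          (allOrb μ).filter (fun O => O.ncard = n) = ∅ := by
        intro μ
        rw [Finset.eq_empty_iff_forall_notMem]
        intro O hO
        rw [Finset.mem_filter] at hO
        obtain ⟨hO1, hO2⟩ := hO
        obtain ⟨-, hE, -, hnc⟩ := allOrb_spec μ hO1
        have hnp := npoint_pos μ hE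
        exact hn ⟨npoint μ (sSup O), hnp, by omega⟩
      rw [hempty m, hempty m']
  obtain ⟨Φ, hbij, hcard⟩ := exists_fiber_bij (allOrb m).card (allOrb m) (allOrb m')
    Set.ncard Set.ncard rfl hfib
  exact ⟨Φ, hbij, hcard⟩

end WgAux

namespace WgAux

variable {k : ℕ}

noncomputable def dlog (m : PairPartition k) (r a : ℕ) : ℕ :=
  sInf {s : ℕ | (⇑(rho m))^[s] r = a}

lemma dlog_spec (m : PairPartition k) {r a : ℕ} (hr : r ∈ Finset.Icc 1 (2 * k))
    (ha : a ∈ SOrb m r) : (⇑(rho m))^[dlog m r a] r = a := by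
  have hne : {s : ℕ | (⇑(rho m))^[s] r = a}.Nonempty := by
    rw [SOrb_eq_finset m hr] at ha
    obtain ⟨s, _, h⟩ := Finset.mem_image.mp (Finset.mem_coe.mp ha)
    exact ⟨s, h⟩
  exact Nat.sInf_mem hne

lemma iterate_mem_SOrb (m : PairPartition k) (r : ℕ) (s : ℕ) :
    (⇑(rho m))^[s] r ∈ SOrb m r := ⟨(s : ℤ), (iterate_eq_zpow m r s).symm⟩

lemma SOrb_subset_orbit (m : PairPartition k) (r : ℕ) : SOrb m r ⊆ gammaOrbit m r := by
  intro x hx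
  rw [orbit_decomp]
  exact Or.inl hx

lemma triv_SOrb_subset_orbit (m : PairPartition k) (r : ℕ) {x : ℕ} (hx : x ∈ SOrb m r) :
    trivFun k x ∈ gammaOrbit m r := by
  rw [orbit_decomp]
  exact Or.inr ⟨x, hx, rfl⟩

lemma SOrb_mem_cases (m : PairPartition k) {r x : ℕ} (hr : r ∈ Finset.Icc 1 (2 * k))
    (hx : x ∈ gammaOrbit m r) :
    (x ∈ SOrb m r ∧ trivFun k x ∉ SOrb m r) ∨
      (x ∉ SOrb m r ∧ trivFun k x ∈ SOrb m r) := by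
  rw [orbit_decomp] at hx
  rcases hx with h | ⟨y, hy, rfl⟩
  · exact Or.inl ⟨h, triv_not_mem_SOrb m hr h⟩
  · refine Or.inr ⟨triv_not_mem_SOrb m hr hy, ?_⟩
    rw [trivFun_invol']
    exact hy

/-- The conjugating map. -/
noncomputable def piFun (m m' : PairPartition k) (Φ : Set ℕ → Set ℕ) (a : ℕ) : ℕ :=
  if a ∈ Finset.Icc 1 (2 * k) then
    (if a ∈ SOrb m (sSup (gammaOrbit m a)) then
      (⇑(rho m'))^[dlog m (sSup (gammaOrbit m a)) a] (sSup (Φ (gammaOrbit m a)))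
    else trivFun k ((⇑(rho m'))^[dlog m (sSup (gammaOrbit m a)) (trivFun k a)]
      (sSup (Φ (gammaOrbit m a)))))
  else a

section PiCore

variable (m m' : PairPartition k) (Φ : Set ℕ → Set ℕ)
variable (hmaps : ∀ O ∈ allOrb m, Φ O ∈ allOrb m')
variable (hc : ∀ O ∈ allOrb m, (Φ O).ncard = O.ncard)

include hmaps hc

lemma pi_core {a : ℕ} (ha : a ∈ Finset.Icc 1 (2 * k)) :
    sSup (gammaOrbit m a) ∈ Finset.Icc 1 (2 * k) ∧
    gammaOrbit m (sSup (gammaOrbit m a)) = gammaOrbit m a ∧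
    sSup (Φ (gammaOrbit m a)) ∈ Finset.Icc 1 (2 * k) ∧
    gammaOrbit m' (sSup (Φ (gammaOrbit m a))) = Φ (gammaOrbit m a) ∧
    npoint m' (sSup (Φ (gammaOrbit m a))) = npoint m (sSup (gammaOrbit m a)) ∧
    a ∈ gammaOrbit m (sSup (gammaOrbit m a)) := by
  have hO : gammaOrbit m a ∈ allOrb m := mem_allOrb m ha
  obtain ⟨h1, h2, h3, h4⟩ := allOrb_spec m hO
  obtain ⟨h1', h2', h3', h4'⟩ := allOrb_spec m' (hmaps _ hO)
  have hnp : npoint m' (sSup (Φ (gammaOrbit m a))) = npoint m (sSup (gammaOrbit m a)) := by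
    have := hc _ hO
    omega
  exact ⟨h2, h3, h2', h3', hnp, by rw [h3]; exact self_mem_gammaOrbit m a⟩

lemma piFun_then {a : ℕ} (ha : a ∈ Finset.Icc 1 (2 * k))
    (hS : a ∈ SOrb m (sSup (gammaOrbit m a))) :
    piFun m m' Φ a = (⇑(rho m'))^[dlog m (sSup (gammaOrbit m a)) a]
      (sSup (Φ (gammaOrbit m a))) := by
  rw [piFun, if_pos ha, if_pos hS]

lemma piFun_else {a : ℕ} (ha : a ∈ Finset.Icc 1 (2 * k))
    (hS : a ∉ SOrb m (sSup (gammaOrbit m a))) :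
    piFun m m' Φ a = trivFun k ((⇑(rho m'))^[dlog m (sSup (gammaOrbit m a)) (trivFun k a)]
      (sSup (Φ (gammaOrbit m a)))) := by
  rw [piFun, if_pos ha, if_neg hS]

omit hmaps hc in
lemma orbit_mem_eqs (μ : PairPartition k) {a x : ℕ} (hx : x ∈ gammaOrbit μ a) :
    gammaOrbit μ x = gammaOrbit μ a := gammaOrbit_eq_of_mem μ hx

/-- ρ-equivariance of `piFun`. -/
lemma piFun_rho {a : ℕ} (ha : a ∈ Finset.Icc 1 (2 * k)) :
    piFun m m' Φ (rho m a) = rho m' (piFun m m' Φ a) := by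
  obtain ⟨hrE, hrO, hr'E, hr'O, hnp, haO⟩ := pi_core m m' Φ hmaps hc ha
  have htrans : ∀ s t : ℤ,
      ((rho m) ^ s) (sSup (gammaOrbit m a)) = ((rho m) ^ t) (sSup (gammaOrbit m a)) →
      ((rho m') ^ s) (sSup (Φ (gammaOrbit m a))) =
        ((rho m') ^ t) (sSup (Φ (gammaOrbit m a))) := by
    intro s t h
    rw [zpow_eq_iff m hrE] at h
    rw [zpow_eq_iff m' hr'E, hnp]
    exact h
  have hraE : rho m a ∈ Finset.Icc 1 (2 * k) := rho_mem m ha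
  have hraO : gammaOrbit m (rho m a) = gammaOrbit m a :=
    orbit_mem_eqs m (rho_mem_orbit m a)
  rcases SOrb_mem_cases m hrE haO with ⟨h1, h2⟩ | ⟨h1, h2⟩
  · -- a ∈ SOrb
    set r := sSup (gammaOrbit m a) with hr
    set r' := sSup (Φ (gammaOrbit m a)) with hr'
    have hsa : (⇑(rho m))^[dlog m r a] r = a := dlog_spec m hrE h1
    have hraS : rho m a ∈ SOrb m r := by
      obtain ⟨s, hs⟩ := h1
      exact ⟨1 + s, by rw [zpow_add, zpow_one, Equiv.Perm.mul_apply, hs]⟩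
    have hwa : (⇑(rho m))^[dlog m r (rho m a)] r = rho m a := dlog_spec m hrE hraS
    rw [piFun_then m m' Φ hmaps hc hraE (by rw [hraO]; exact hraS),
      piFun_then m m' Φ hmaps hc ha h1, hraO]
    rw [iterate_eq_zpow]
    have key : ((rho m) ^ ((dlog m r (rho m a) : ℕ) : ℤ)) r =
        ((rho m) ^ (1 + ((dlog m r a : ℕ) : ℤ))) r := by
      rw [← iterate_eq_zpow, hwa, zpow_add, zpow_one, Equiv.Perm.mul_apply,
        ← iterate_eq_zpow, hsa]
    have key' := htrans _ _ key
    rw [key', zpow_add, zpow_one, Equiv.Perm.mul_apply, ← iterate_eq_zpow]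
  · -- a ∉ SOrb ; y := trivFun k a ∈ SOrb
    set r := sSup (gammaOrbit m a) with hr
    set r' := sSup (Φ (gammaOrbit m a)) with hr'
    have hsy : (⇑(rho m))^[dlog m r (trivFun k a)] r = trivFun k a := dlog_spec m hrE h2
    -- e (ρ a) = ρ^{-1} (e a)
    have heRho : trivFun k (rho m a) = ((rho m) ^ (-1 : ℤ)) (trivFun k a) := by
      have := triv_apply_zpow m 1 a
      rw [zpow_one] at this
      exact this
    have heRhoS : trivFun k (rho m a) ∈ SOrb m r := by
      obtain ⟨s, hs⟩ := h2
      rw [heRho, ← hs, ← Equiv.Perm.mul_apply, ← zpow_add]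
      exact ⟨-1 + s, rfl⟩
    have hraN : rho m a ∉ SOrb m r := by
      have := triv_not_mem_SOrb m hrE heRhoS
      rw [trivFun_invol'] at this
      exact this
    rw [piFun_else m m' Φ hmaps hc hraE (by rw [hraO]; exact hraN),
      piFun_else m m' Φ hmaps hc ha h1, hraO]
    have hw : (⇑(rho m))^[dlog m r (trivFun k (rho m a))] r = trivFun k (rho m a) :=
      dlog_spec m hrE heRhoS
    have key : ((rho m) ^ ((dlog m r (trivFun k (rho m a)) : ℕ) : ℤ)) r =
        ((rho m) ^ ((-1 : ℤ) + ((dlog m r (trivFun k a) : ℕ) : ℤ))) r := by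
      rw [← iterate_eq_zpow, hw, heRho, zpow_add, Equiv.Perm.mul_apply,
        ← iterate_eq_zpow, hsy]
    have key' := htrans _ _ key
    rw [iterate_eq_zpow, key']
    -- now: e (ρ'^{-1+s} r') = ρ' (e (ρ'^[s] r'))
    have hfin : trivFun k (((rho m') ^ ((-1 : ℤ) + ((dlog m r (trivFun k a) : ℕ) : ℤ))) r')
        = rho m' (trivFun k ((⇑(rho m'))^[dlog m r (trivFun k a)] r')) := by
      rw [zpow_add, Equiv.Perm.mul_apply]
      have := triv_apply_zpow m' (-1) (((rho m') ^ ((dlog m r (trivFun k a) : ℕ) : ℤ)) r')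
      rw [neg_neg, zpow_one] at this
      rw [this, ← iterate_eq_zpow]
    rw [hfin]

/-- e-equivariance of `piFun`. -/
lemma piFun_triv {a : ℕ} (ha : a ∈ Finset.Icc 1 (2 * k)) :
    piFun m m' Φ (trivFun k a) = trivFun k (piFun m m' Φ a) := by
  obtain ⟨hrE, hrO, hr'E, hr'O, hnp, haO⟩ := pi_core m m' Φ hmaps hc ha
  have heaE : trivFun k a ∈ Finset.Icc 1 (2 * k) := trivFun_mem ha
  have heaO : gammaOrbit m (trivFun k a) = gammaOrbit m a :=
    orbit_mem_eqs m (triv_mem_orbit m a)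
  rcases SOrb_mem_cases m hrE haO with ⟨h1, h2⟩ | ⟨h1, h2⟩
  · rw [piFun_else m m' Φ hmaps hc heaE (by rw [heaO]; exact h2),
      piFun_then m m' Φ hmaps hc ha h1, heaO, trivFun_invol']
  · rw [piFun_then m m' Φ hmaps hc heaE (by rw [heaO]; exact h2),
      piFun_else m m' Φ hmaps hc ha h1, heaO, trivFun_invol']

/-- m-equivariance of `piFun`. -/
lemma piFun_m {a : ℕ} (ha : a ∈ Finset.Icc 1 (2 * k)) :
    piFun m m' Φ (m.f a) = m'.f (piFun m m' Φ a) := by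
  have h1 : m.f a = rho m (trivFun k a) := by
    rw [rho_apply, trivFun_invol']
  have h2 : ∀ y, m'.f y = rho m' (trivFun k y) := by
    intro y
    rw [rho_apply, trivFun_invol']
  rw [h1, piFun_rho m m' Φ hmaps hc (trivFun_mem ha),
    piFun_triv m m' Φ hmaps hc ha, h2]

lemma piFun_mapsTo {a : ℕ} (ha : a ∈ Finset.Icc 1 (2 * k)) :
    piFun m m' Φ a ∈ Finset.Icc 1 (2 * k) := by
  obtain ⟨hrE, hrO, hr'E, hr'O, hnp, haO⟩ := pi_core m m' Φ hmaps hc ha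
  by_cases hS : a ∈ SOrb m (sSup (gammaOrbit m a))
  · rw [piFun_then m m' Φ hmaps hc ha hS]
    exact iterate_mem m' hr'E _
  · rw [piFun_else m m' Φ hmaps hc ha hS]
    exact trivFun_mem (iterate_mem m' hr'E _)

lemma piFun_mem_orbit {a : ℕ} (ha : a ∈ Finset.Icc 1 (2 * k)) :
    piFun m m' Φ a ∈ Φ (gammaOrbit m a) := by
  obtain ⟨hrE, hrO, hr'E, hr'O, hnp, haO⟩ := pi_core m m' Φ hmaps hc ha
  by_cases hS : a ∈ SOrb m (sSup (gammaOrbit m a))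
  · rw [piFun_then m m' Φ hmaps hc ha hS]
    have h := SOrb_subset_orbit m' (sSup (Φ (gammaOrbit m a)))
      (iterate_mem_SOrb m' (sSup (Φ (gammaOrbit m a))) (dlog m (sSup (gammaOrbit m a)) a))
    rwa [hr'O] at h
  · rw [piFun_else m m' Φ hmaps hc ha hS]
    have h := triv_SOrb_subset_orbit m' (sSup (Φ (gammaOrbit m a)))
      (iterate_mem_SOrb m' (sSup (Φ (gammaOrbit m a)))
        (dlog m (sSup (gammaOrbit m a)) (trivFun k a)))
    rwa [hr'O] at h

lemma piFun_injOn (hinj : Set.InjOn Φ ↑(allOrb m)) :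
    Set.InjOn (piFun m m' Φ) ↑(Finset.Icc 1 (2 * k)) := by
  intro a ha b hb hab
  rw [Finset.mem_coe] at ha hb
  obtain ⟨hrEa, hrOa, hr'Ea, hr'Oa, hnpa, haO⟩ := pi_core m m' Φ hmaps hc ha
  obtain ⟨hrEb, hrOb, hr'Ob', hr'Ob, hnpb, hbO⟩ := pi_core m m' Φ hmaps hc hb
  -- first: the target orbits must coincide
  have horb : gammaOrbit m a = gammaOrbit m b := by
    by_contra hne
    have hΦne : Φ (gammaOrbit m a) ≠ Φ (gammaOrbit m b) := by
      intro h
      exact hne (hinj (Finset.mem_coe.mpr (mem_allOrb m ha))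
        (Finset.mem_coe.mpr (mem_allOrb m hb)) h)
    have hmem_a := piFun_mem_orbit m m' Φ hmaps hc ha
    have hmem_b := piFun_mem_orbit m m' Φ hmaps hc hb
    rw [hab] at hmem_a
    -- piFun b lies in both target orbits, so they are equal
    have h1 : gammaOrbit m' (piFun m m' Φ b) = Φ (gammaOrbit m a) := by
      rw [← hr'Oa]
      exact orbit_mem_eqs m' (by rw [hr'Oa]; exact hmem_a)
    have h2 : gammaOrbit m' (piFun m m' Φ b) = Φ (gammaOrbit m b) := by
      rw [← hr'Ob]
      exact orbit_mem_eqs m' (by rw [hr'Ob]; exact hmem_b)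
    exact hΦne (h1 ▸ h2 ▸ rfl)
  -- same orbit: same r, r'
  have hrr : sSup (gammaOrbit m b) = sSup (gammaOrbit m a) := by rw [horb]
  have htrans' : ∀ s t : ℤ,
      ((rho m') ^ s) (sSup (Φ (gammaOrbit m a))) =
        ((rho m') ^ t) (sSup (Φ (gammaOrbit m a))) →
      ((rho m) ^ s) (sSup (gammaOrbit m a)) = ((rho m) ^ t) (sSup (gammaOrbit m a)) := by
    intro s t h
    rw [zpow_eq_iff m' hr'Ea, hnpa] at h
    rw [zpow_eq_iff m hrEa]
    exact h
  set r := sSup (gammaOrbit m a) with hrdef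
  set r' := sSup (Φ (gammaOrbit m a)) with hr'def
  have hΦrr : Φ (gammaOrbit m b) = Φ (gammaOrbit m a) := by rw [horb]
  have hbO' : b ∈ gammaOrbit m r := by rw [hrOa, horb]; exact self_mem_gammaOrbit m b
  rcases SOrb_mem_cases m hrEa haO with ⟨ha1, ha2⟩ | ⟨ha1, ha2⟩ <;>
    rcases SOrb_mem_cases m hrEa hbO' with ⟨hb1, hb2⟩ | ⟨hb1, hb2⟩
  · -- both in SOrb
    rw [piFun_then m m' Φ hmaps hc ha ha1,
      piFun_then m m' Φ hmaps hc hb (by rw [hrr]; exact hb1), hrr, hΦrr] at hab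
    rw [iterate_eq_zpow, iterate_eq_zpow] at hab
    have key := htrans' _ _ hab
    rw [← iterate_eq_zpow, ← iterate_eq_zpow, dlog_spec m hrEa ha1,
      dlog_spec m hrEa hb1] at key
    exact key
  · -- a ∈ SOrb, b ∉
    exfalso
    rw [piFun_then m m' Φ hmaps hc ha ha1,
      piFun_else m m' Φ hmaps hc hb (by rw [hrr]; exact hb1), hrr, hΦrr] at hab
    have hmem2 := triv_not_mem_SOrb m' hr'Ea
      (iterate_mem_SOrb m' r' (dlog m r (trivFun k b)))
    rw [← hab] at hmem2
    exact hmem2 (iterate_mem_SOrb m' _ _)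
  · -- a ∉ SOrb, b ∈
    exfalso
    rw [piFun_else m m' Φ hmaps hc ha ha1,
      piFun_then m m' Φ hmaps hc hb (by rw [hrr]; exact hb1), hrr, hΦrr] at hab
    have hmem2 := triv_not_mem_SOrb m' hr'Ea
      (iterate_mem_SOrb m' r' (dlog m r (trivFun k a)))
    rw [hab] at hmem2
    exact hmem2 (iterate_mem_SOrb m' _ _)
  · -- both not in SOrb
    rw [piFun_else m m' Φ hmaps hc ha ha1,
      piFun_else m m' Φ hmaps hc hb (by rw [hrr]; exact hb1), hrr, hΦrr] at hab
    have hab2 := trivFun_injective hab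
    rw [iterate_eq_zpow, iterate_eq_zpow] at hab2
    have key := htrans' _ _ hab2
    rw [← iterate_eq_zpow, ← iterate_eq_zpow, dlog_spec m hrEa ha2,
      dlog_spec m hrEa hb2] at key
    exact trivFun_injective key

end PiCore

lemma exists_pi (m m' : PairPartition k) (hsame : SameCosetType m m') :
    ∃ π : ℕ → ℕ,
      Set.InjOn π ↑(Finset.Icc 1 (2 * k)) ∧
      (∀ a ∈ Finset.Icc 1 (2 * k), π a ∈ Finset.Icc 1 (2 * k)) ∧
      (∀ a ∈ Finset.Icc 1 (2 * k), π (trivFun k a) = trivFun k (π a)) ∧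
      (∀ a ∈ Finset.Icc 1 (2 * k), π (m.f a) = m'.f (π a)) := by
  obtain ⟨Φ, hΦ, hΦc⟩ := exists_Phi m m' hsame
  have hmaps : ∀ O ∈ allOrb m, Φ O ∈ allOrb m' := by
    intro O hO
    exact Finset.mem_coe.mp (hΦ.1 (Finset.mem_coe.mpr hO))
  have hc : ∀ O ∈ allOrb m, (Φ O).ncard = O.ncard := hΦc
  exact ⟨piFun m m' Φ, piFun_injOn m m' Φ hmaps hc hΦ.2.1,
    fun a ha => piFun_mapsTo m m' Φ hmaps hc ha,
    fun a ha => piFun_triv m m' Φ hmaps hc ha,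
    fun a ha => piFun_m m m' Φ hmaps hc ha⟩

end WgAux

namespace WgAux

variable {k : ℕ}

lemma trivFun_odd {a : ℕ} (h1 : 1 ≤ a) (h2 : a ≤ 2 * k) (hodd : a % 2 = 1) :
    trivFun k a = a + 1 := by
  unfold trivFun
  rw [if_pos ⟨h1, h2⟩, if_pos hodd]

lemma trivFun_even {a : ℕ} (h1 : 1 ≤ a) (h2 : a ≤ 2 * k) (heven : a % 2 = 0) :
    trivFun k a = a - 1 := by
  unfold trivFun
  rw [if_pos ⟨h1, h2⟩, if_neg (by omega)]

lemma strongAdm_comp {N : ℕ} (m m' : PairPartition k) (i' : ℕ → Fin N)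
    (hi' : StronglyAdmissible k m' i') (π : ℕ → ℕ)
    (hπinj : Set.InjOn π ↑(Finset.Icc 1 (2 * k)))
    (hmap : ∀ a ∈ Finset.Icc 1 (2 * k), π a ∈ Finset.Icc 1 (2 * k))
    (hm : ∀ a ∈ Finset.Icc 1 (2 * k), π (m.f a) = m'.f (π a)) :
    StronglyAdmissible k m (fun x => i' (π x)) := by
  intro a b ha1 ha2 hb1 hb2
  have haE : a ∈ Finset.Icc 1 (2 * k) := Finset.mem_Icc.mpr ⟨ha1, ha2⟩
  have hbE : b ∈ Finset.Icc 1 (2 * k) := Finset.mem_Icc.mpr ⟨hb1, hb2⟩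
  have hπa := hmap a haE
  have hπb := hmap b hbE
  rw [Finset.mem_Icc] at hπa hπb
  rw [hi' (π a) (π b) hπa.1 hπa.2 hπb.1 hπb.2]
  constructor
  · rintro (h | h)
    · exact Or.inl (hπinj (Finset.mem_coe.mpr haE) (Finset.mem_coe.mpr hbE) h)
    · right
      rw [← hm a haE] at h
      exact hπinj (Finset.mem_coe.mpr (mf_mem m haE)) (Finset.mem_coe.mpr hbE) h
  · rintro (rfl | h)
    · exact Or.inl rfl
    · right
      rw [← h, hm a haE]

lemma exists_sigma {N : ℕ} (m : PairPartition k) (i i'' : ℕ → Fin N)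
    (hi : StronglyAdmissible k m i) (hi'' : StronglyAdmissible k m i'') :
    ∃ σ : Equiv.Perm (Fin N), ∀ a ∈ Finset.Icc 1 (2 * k), σ (i a) = i'' a := by
  classical
  set V : Set (Fin N) := ↑((Finset.Icc 1 (2 * k)).image i) with hV
  set W : Set (Fin N) := ↑((Finset.Icc 1 (2 * k)).image i'') with hW
  have hVmem : ∀ v : V, ∃ a, a ∈ Finset.Icc 1 (2 * k) ∧ i a = v := by
    rintro ⟨v, hv⟩
    obtain ⟨a, ha, hia⟩ := Finset.mem_image.mp (Finset.mem_coe.mp hv)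
    exact ⟨a, ha, hia⟩
  choose pre hpre1 hpre2 using hVmem
  have keyEq : ∀ (a b : ℕ), a ∈ Finset.Icc 1 (2 * k) → b ∈ Finset.Icc 1 (2 * k) →
      (i a = i b ↔ i'' a = i'' b) := by
    intro a b ha hb
    rw [Finset.mem_Icc] at ha hb
    rw [hi a b ha.1 ha.2 hb.1 hb.2, hi'' a b ha.1 ha.2 hb.1 hb.2]
  have gmem : ∀ v : V, i'' (pre v) ∈ W := by
    intro v
    exact Finset.mem_coe.mpr (Finset.mem_image_of_mem _ (hpre1 v))
  let g : V → W := fun v => ⟨i'' (pre v), gmem v⟩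
  have ginj : Function.Injective g := by
    intro v1 v2 h
    have h2 : i'' (pre v1) = i'' (pre v2) := congrArg Subtype.val h
    rw [← keyEq _ _ (hpre1 v1) (hpre1 v2)] at h2
    rw [hpre2 v1, hpre2 v2] at h2
    exact Subtype.ext h2
  have gsurj : Function.Surjective g := by
    rintro ⟨w, hw⟩
    obtain ⟨b, hb, hib⟩ := Finset.mem_image.mp (Finset.mem_coe.mp hw)
    have hvb : i b ∈ V := Finset.mem_coe.mpr (Finset.mem_image_of_mem _ hb)
    refine ⟨⟨i b, hvb⟩, ?_⟩
    apply Subtype.ext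
    show i'' (pre ⟨i b, hvb⟩) = w
    have h1 : i (pre ⟨i b, hvb⟩) = i b := hpre2 ⟨i b, hvb⟩
    rw [keyEq _ _ (hpre1 ⟨i b, hvb⟩) hb] at h1
    rw [h1, hib]
  let eV : V ≃ W := Equiv.ofBijective g ⟨ginj, gsurj⟩
  have hcard : Fintype.card ↥(Vᶜ) = Fintype.card ↥(Wᶜ) := by
    rw [Fintype.card_compl_set, Fintype.card_compl_set, Fintype.card_congr eV]
  let eC : ↥(Vᶜ) ≃ ↥(Wᶜ) := Fintype.equivOfCardEq hcard
  refine ⟨(Equiv.Set.sumCompl V).symm.trans ((eV.sumCongr eC).trans (Equiv.Set.sumCompl W)), ?_⟩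
  intro a ha
  have hva : i a ∈ V := Finset.mem_coe.mpr (Finset.mem_image_of_mem _ ha)
  simp only [Equiv.trans_apply]
  rw [Equiv.Set.sumCompl_symm_apply_of_mem hva]
  simp only [Equiv.sumCongr_apply, Sum.map_inl]
  rw [Equiv.Set.sumCompl_apply_inl]
  show i'' (pre ⟨i a, hva⟩) = i'' a
  have h1 : i (pre ⟨i a, hva⟩) = i a := hpre2 ⟨i a, hva⟩
  rw [keyEq _ _ (hpre1 ⟨i a, hva⟩) ha] at h1
  exact h1

/-- Permutation matrix. -/
def permMat {N : ℕ} (σ : Equiv.Perm (Fin N)) : Matrix (Fin N) (Fin N) ℝ :=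
  Matrix.of fun p q => if σ p = q then (1 : ℝ) else 0

lemma permMat_mul_apply {N : ℕ} (σ : Equiv.Perm (Fin N)) (A : Matrix (Fin N) (Fin N) ℝ)
    (p q : Fin N) : (permMat σ * A) p q = A (σ p) q := by
  rw [Matrix.mul_apply]
  rw [Finset.sum_eq_single (σ p)]
  · simp [permMat]
  · intro b _ hb
    simp [permMat, Ne.symm hb]
  · intro h
    exact absurd (Finset.mem_univ _) h

lemma mul_permMatT_apply {N : ℕ} (σ : Equiv.Perm (Fin N)) (A : Matrix (Fin N) (Fin N) ℝ)
    (p q : Fin N) : (A * Matrix.transpose (permMat σ)) p q = A p (σ q) := by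
  rw [Matrix.mul_apply]
  rw [Finset.sum_eq_single (σ q)]
  · simp [permMat, Matrix.transpose_apply]
  · intro b _ hb
    simp [permMat, Matrix.transpose_apply, Ne.symm hb]
  · intro h
    exact absurd (Finset.mem_univ _) h

lemma permMat_orth {N : ℕ} (σ : Equiv.Perm (Fin N)) :
    permMat σ ∈ Matrix.orthogonalGroup (Fin N) ℝ := by
  rw [Matrix.mem_orthogonalGroup_iff]
  have hstar : star (permMat σ) = Matrix.transpose (permMat σ) := by
    rw [Matrix.star_eq_conjTranspose]
    ext p q
    simp [Matrix.conjTranspose_apply]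
  ext p q
  rw [mul_permMatT_apply]
  simp only [permMat, Matrix.of_apply, Matrix.one_apply]
  by_cases h : p = q
  · subst h; simp
  · rw [if_neg (fun hc => h (σ.injective hc)), if_neg h]

lemma conj_entry {N : ℕ} (σ : Equiv.Perm (Fin N)) (A : Matrix (Fin N) (Fin N) ℝ)
    (p q : Fin N) :
    (permMat σ * A * Matrix.transpose (permMat σ)) p q = A (σ p) (σ q) := by
  rw [mul_permMatT_apply, permMat_mul_apply]

/-- Reindexing the product under a pair-structure-preserving injection. -/
lemma prod_reindex {N : ℕ} (i' : ℕ → Fin N) (π : ℕ → ℕ)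
    (hπinj : Set.InjOn π ↑(Finset.Icc 1 (2 * k)))
    (hmap : ∀ a ∈ Finset.Icc 1 (2 * k), π a ∈ Finset.Icc 1 (2 * k))
    (hcomm : ∀ a ∈ Finset.Icc 1 (2 * k), π (trivFun k a) = trivFun k (π a))
    (A : Matrix (Fin N) (Fin N) ℝ) (hA : Matrix.transpose A = A) :
    prodEntries k (fun x => i' (π x)) A = prodEntries k i' A := by
  classical
  unfold prodEntries
  have hmemE : ∀ a : ℕ, a ∈ Finset.range k →
      (2 * a + 1) ∈ Finset.Icc 1 (2 * k) ∧ (2 * a + 2) ∈ Finset.Icc 1 (2 * k) := by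
    intro a ha
    rw [Finset.mem_range] at ha
    constructor <;> (rw [Finset.mem_Icc]; omega)
  have hpair : ∀ a : ℕ, a ∈ Finset.range k → π (2 * a + 2) = trivFun k (π (2 * a + 1)) := by
    intro a ha
    have h1 := (hmemE a ha).1
    have : trivFun k (2 * a + 1) = 2 * a + 2 := by
      rw [Finset.mem_Icc] at h1
      rw [trivFun_odd h1.1 h1.2 (by omega)]
    rw [← this, hcomm _ h1]
  set idx : ℕ → ℕ := fun a => (π (2 * a + 1) - 1) / 2 with hidx
  have hy : ∀ a : ℕ, a ∈ Finset.range k →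
      (π (2 * a + 1) = 2 * idx a + 1 ∨ π (2 * a + 1) = 2 * idx a + 2) ∧
        idx a ∈ Finset.range k := by
    intro a ha
    have h1 := hmap _ (hmemE a ha).1
    rw [Finset.mem_Icc] at h1
    simp only [hidx, Finset.mem_range]
    omega
  have hinj12 : ∀ x y, x ∈ Finset.Icc 1 (2 * k) → y ∈ Finset.Icc 1 (2 * k) →
      π x = π y → x = y := fun x y hx hy h =>
    hπinj (Finset.mem_coe.mpr hx) (Finset.mem_coe.mpr hy) h
  have hidxinj : ∀ a₁, a₁ ∈ Finset.range k → ∀ a₂, a₂ ∈ Finset.range k →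
      idx a₁ = idx a₂ → a₁ = a₂ := by
    intro a ha b hb hab
    obtain ⟨hya, -⟩ := hy a ha
    obtain ⟨hyb, -⟩ := hy b hb
    have haE := (hmemE a ha).1
    have hbE := (hmemE b hb).1
    have haE2 := (hmemE a ha).2
    have hbE2 := (hmemE b hb).2
    rcases hya with h1 | h1 <;> rcases hyb with h2 | h2
    · have : π (2 * a + 1) = π (2 * b + 1) := by rw [h1, h2, hab]
      have := hinj12 _ _ haE hbE this
      omega
    · exfalso
      have hE : π (2 * a + 1) ∈ Finset.Icc 1 (2 * k) := hmap _ haE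
      rw [Finset.mem_Icc] at hE
      have h3 : trivFun k (π (2 * a + 1)) = π (2 * b + 1) := by
        rw [trivFun_odd hE.1 hE.2 (by omega), h1, h2, hab]
      rw [← hpair a ha] at h3
      have := hinj12 _ _ haE2 hbE h3
      omega
    · exfalso
      have hE : π (2 * b + 1) ∈ Finset.Icc 1 (2 * k) := hmap _ hbE
      rw [Finset.mem_Icc] at hE
      have h3 : trivFun k (π (2 * b + 1)) = π (2 * a + 1) := by
        rw [trivFun_odd hE.1 hE.2 (by omega), h1, h2, hab.symm]
      rw [← hpair b hb] at h3
      have := hinj12 _ _ hbE2 haE h3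
      omega
    · have : π (2 * a + 1) = π (2 * b + 1) := by rw [h1, h2, hab]
      have := hinj12 _ _ haE hbE this
      omega
  refine Finset.prod_bij (fun a _ => idx a) (fun a ha => (hy a ha).2)
    (fun a ha b hb h => hidxinj a ha b hb h) ?_ ?_
  · -- surjectivity
    intro b hb
    obtain ⟨a, ha, hab⟩ := Finset.surj_on_of_inj_on_of_card_le (s := Finset.range k)
      (t := Finset.range k) (fun a _ => idx a) (fun a ha => (hy a ha).2)
      (fun a₁ a₂ h₁ h₂ => hidxinj a₁ h₁ a₂ h₂) le_rfl b hb
    exact ⟨a, ha, hab.symm⟩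
  · -- factors agree
    intro a ha
    obtain ⟨hya, hidxa⟩ := hy a ha
    show A (i' (π (2 * a + 1))) (i' (π (2 * a + 2))) =
      A (i' (2 * idx a + 1)) (i' (2 * idx a + 2))
    have hE : π (2 * a + 1) ∈ Finset.Icc 1 (2 * k) := hmap _ (hmemE a ha).1
    rw [Finset.mem_Icc] at hE
    rcases hya with h1 | h1
    · have h2 : π (2 * a + 2) = 2 * idx a + 2 := by
        rw [hpair a ha, trivFun_odd hE.1 hE.2 (by omega), h1]
      rw [h1, h2]
    · have h2 : π (2 * a + 2) = 2 * idx a + 1 := by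
        rw [hpair a ha, trivFun_even hE.1 hE.2 (by omega), h1]
        omega
      rw [h1, h2]
      -- A (i' (2b+2)) (i' (2b+1)) = A (i' (2b+1)) (i' (2b+2)) by symmetry
      conv_rhs => rw [← hA]
      rw [Matrix.transpose_apply]

end WgAux

namespace WgAux

instance matrixBorel {N : ℕ} : BorelSpace (Matrix (Fin N) (Fin N) ℝ) :=
  inferInstanceAs (BorelSpace (Fin N → Fin N → ℝ))

instance orthBorel {N : ℕ} : BorelSpace (OrthGroup N) := ⟨rfl⟩

lemma measurable_prodEntries {N : ℕ} (k : ℕ) (i : ℕ → Fin N) :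
    Measurable (prodEntries k i) := by
  unfold prodEntries
  apply Finset.measurable_prod
  intro a _
  exact (measurable_pi_apply (i (2 * a + 2))).comp (measurable_pi_apply (i (2 * a + 1)))

lemma continuous_grassMap {N M : ℕ} : Continuous (grassMap N M) := by
  unfold grassMap
  exact (continuous_subtype_val.matrix_mul continuous_const).matrix_mul
    continuous_subtype_val.matrix_transpose

lemma measurable_grassMap {N M : ℕ} : Measurable (grassMap N M) :=
  continuous_grassMap.measurable

lemma grassMap_symm {N M : ℕ} (O : OrthGroup N) :
    Matrix.transpose (grassMap N M O) = grassMap N M O := by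
  unfold grassMap IMN
  rw [Matrix.transpose_mul, Matrix.transpose_mul, Matrix.transpose_transpose,
    Matrix.diagonal_transpose]
  simp only [Matrix.mul_assoc]

lemma grassMap_conj {N M : ℕ} (g O : OrthGroup N) :
    grassMap N M (g * O) = (g : Matrix (Fin N) (Fin N) ℝ) * grassMap N M O *
      Matrix.transpose (g : Matrix (Fin N) (Fin N) ℝ) := by
  unfold grassMap
  have hcoe : ((g * O : OrthGroup N) : Matrix (Fin N) (Fin N) ℝ) =
      (g : Matrix (Fin N) (Fin N) ℝ) * (O : Matrix (Fin N) (Fin N) ℝ) := rfl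
  rw [hcoe, Matrix.transpose_mul]
  simp only [Matrix.mul_assoc]

end WgAux


/-- **Well-definedness and coset-type invariance of the Grassmannian Weingarten
function** (Section 3.1).  Fix `k ≥ 1`, `k ≤ N` and `1 ≤ M < N`, and let `μ` be the
pushforward of the normalised Haar measure `ν` on `O(N)` under `O ↦ O I_{M,N} Oᵀ`.
If `𝔪, 𝔪' ∈ 𝒫_k` have the same coset-type, then for any `i` strongly admissible for
`𝔪` and any `i'` strongly admissible for `𝔪'`,
`∫ ∏_a A_{i(2a-1) i(2a)} dμ = ∫ ∏_a A_{i'(2a-1) i'(2a)} dμ`.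
In particular `Wg^A(𝔪)` is well defined and depends only on the coset-type of `𝔪`. -/
theorem weingarten_A_wellDefined_cosetType_invariant
    (k N M : ℕ) (hk : 1 ≤ k) (hkN : k ≤ N) (hM : 1 ≤ M) (hMN : M < N)
    (ν : Measure (OrthGroup N)) (hprob : IsProbabilityMeasure ν)
    (hinv : ∀ g : OrthGroup N, Measure.map (fun x => g * x) ν = ν)
    (m m' : PairPartition k) (hsame : SameCosetType m m')
    (i i' : ℕ → Fin N)
    (hi : StronglyAdmissible k m i) (hi' : StronglyAdmissible k m' i') :
    ∫ A, prodEntries k i A ∂(Measure.map (grassMap N M) ν) =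
      ∫ A, prodEntries k i' A ∂(Measure.map (grassMap N M) ν) := by
  classical
  obtain ⟨π, hπinj, hπmap, hπtriv, hπm⟩ := WgAux.exists_pi m m' hsame
  have hi'' : StronglyAdmissible k m (fun x => i' (π x)) :=
    WgAux.strongAdm_comp m m' i' hi' π hπinj hπmap hπm
  obtain ⟨σ, hσ⟩ := WgAux.exists_sigma m i (fun x => i' (π x)) hi hi''
  set g₀ : OrthGroup N := ⟨WgAux.permMat σ, WgAux.permMat_orth σ⟩ with hg₀
  have hgm : Measurable (grassMap N M) := WgAux.measurable_grassMap
  have hmul : Measurable (fun x : OrthGroup N => g₀ * x) := by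
    apply Continuous.measurable
    apply continuous_induced_rng.mpr
    exact continuous_const.matrix_mul continuous_subtype_val
  have hPi : Measurable (prodEntries k i) := WgAux.measurable_prodEntries k i
  have hPi' : Measurable (prodEntries k i') := WgAux.measurable_prodEntries k i'
  have key : ∀ O : OrthGroup N,
      prodEntries k i (grassMap N M (g₀ * O)) = prodEntries k i' (grassMap N M O) := by
    intro O
    rw [WgAux.grassMap_conj]
    have hsym := WgAux.grassMap_symm (M := M) O
    have hent : ∀ a ∈ Finset.range k,
        ((g₀ : Matrix (Fin N) (Fin N) ℝ) * grassMap N M O *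
          Matrix.transpose (g₀ : Matrix (Fin N) (Fin N) ℝ)) (i (2 * a + 1)) (i (2 * a + 2))
        = grassMap N M O (i' (π (2 * a + 1))) (i' (π (2 * a + 2))) := by
      intro a ha
      rw [show (g₀ : Matrix (Fin N) (Fin N) ℝ) = WgAux.permMat σ from rfl,
        WgAux.conj_entry]
      rw [Finset.mem_range] at ha
      rw [hσ _ (by rw [Finset.mem_Icc]; omega), hσ _ (by rw [Finset.mem_Icc]; omega)]
    calc prodEntries k i ((g₀ : Matrix (Fin N) (Fin N) ℝ) * grassMap N M O *
          Matrix.transpose (g₀ : Matrix (Fin N) (Fin N) ℝ))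
        = prodEntries k (fun x => i' (π x)) (grassMap N M O) := by
          unfold prodEntries
          exact Finset.prod_congr rfl hent
      _ = prodEntries k i' (grassMap N M O) :=
          WgAux.prod_reindex i' π hπinj hπmap hπtriv _ hsym
  calc ∫ A, prodEntries k i A ∂(Measure.map (grassMap N M) ν)
      = ∫ O, prodEntries k i (grassMap N M O) ∂ν :=
        integral_map hgm.aemeasurable hPi.aestronglyMeasurable
    _ = ∫ O, prodEntries k i (grassMap N M (g₀ * O)) ∂ν := by
        conv_lhs => rw [← hinv g₀]
        exact integral_map hmul.aemeasurable (hPi.comp hgm).aestronglyMeasurable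
    _ = ∫ O, prodEntries k i' (grassMap N M O) ∂ν := by
        simp only [key]
    _ = ∫ A, prodEntries k i' A ∂(Measure.map (grassMap N M) ν) :=
        (integral_map hgm.aemeasurable hPi'.aestronglyMeasurable).symm
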